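/- arXiv:0710.5380 — 3 statements merged into one kernel-verified Lean document; each statement's English description precedes it below -/
import Mathlib

section
/- Durrett's bound for 2N-dependent oriented percolation (Theorem 3.2): Let N ∈ ℕ and θ ∈ (0, 1), and let (ω(x, n))_{(x,n)∈𝓛} be a family of {0,1}-valued random variables that is 2N-dependent with density at least 1 − θ. Define the open cluster of the origin C₀ = {(y, n) ∈ 𝓛 : (0, 0) → (y, n)}. If θ ≤ 6^{−4(4N+1)²}, then P[|C₀| < ∞] ≤ 55 θ^{1/(4N+1)²}, and moreover 55 θ^{1/(4N+1)²} ≤ 1/20. -/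
open MeasureTheory Filter
open scoped ENNReal

/-- `(x, m) → (y, n)`: there is an open oriented path in the percolation structure
given by the open-site events `op`. -/
def Reaches {Ω : Type*} (op : ℤ → ℕ → Set Ω) (ω : Ω) (x : ℤ) (m : ℕ) (y : ℤ) (n : ℕ) : Prop :=
  ∃ f : ℕ → ℤ, f m = x ∧ f n = y ∧
    (∀ k, m < k → k ≤ n → f k - f (k - 1) = 1 ∨ f k - f (k - 1) = -1) ∧
    (∀ k, m ≤ k → k ≤ n → ω ∈ op (f k) k)

/-- The family of open-site events `op` (indexed by the sites of
`𝓛 = {(x, n) : x + n even}`) is `2N`-dependent with density at least `1 - θ`: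
for any finite set `I` of sites of `𝓛` whose pairwise `ℓ∞`-distances all exceed `2N`,
`P[all sites of I are closed] ≤ θ^{|I|}`. -/
def TwoNDependentDensity {Ω : Type*} {m0 : MeasurableSpace Ω} (P : Measure Ω)
    (N : ℕ) (θ : ℝ) (op : ℤ → ℕ → Set Ω) : Prop :=
  ∀ I : Finset (ℤ × ℕ),
    (∀ p ∈ I, Even (p.1 + (p.2 : ℤ))) →
    (∀ p ∈ I, ∀ q ∈ I, p ≠ q →
      (2 * N : ℤ) < max |p.1 - q.1| |(p.2 : ℤ) - (q.2 : ℤ)|) →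
    P (⋂ p ∈ I, (op p.1 p.2)ᶜ) ≤ ENNReal.ofReal (θ ^ I.card)

namespace DurrettProof

abbrev Cell := ℤ × ℤ
abbrev St := Cell × Cell

def e1 : Cell := (1, 0)
def e2 : Cell := (0, 1)

def rho (w : Cell) : Cell := (w.2, -w.1)

def IsDir (w : Cell) : Prop := w = e1 ∨ w = e2 ∨ w = -e1 ∨ w = -e2

def tdir (s : St) : Cell := rho (s.2 - s.1)

def cand (s : St) (j : Fin 3) : St :=
  if j = 0 then (s.1, s.1 + tdir s)
  else if j = 1 then (s.1 + tdir s, s.2 + tdir s)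
  else (s.2 + tdir s, s.2)

@[simp] lemma cand_zero (s : St) : cand s 0 = (s.1, s.1 + tdir s) := rfl
@[simp] lemma cand_one (s : St) : cand s 1 = (s.1 + tdir s, s.2 + tdir s) := rfl
@[simp] lemma cand_two (s : St) : cand s 2 = (s.2 + tdir s, s.2) := rfl

open Classical in
noncomputable def choiceF (F : Set Cell) (s : St) : Fin 3 :=
  if s.1 + tdir s ∉ F then 0 else if s.2 + tdir s ∉ F then 1 else 2

noncomputable def succF (F : Set Cell) (s : St) : St := cand s (choiceF F s)

def Valid (F : Set Cell) (s : St) : Prop := IsDir (s.2 - s.1) ∧ s.1 ∈ F ∧ s.2 ∉ F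

open Classical in
noncomputable def predF (F : Set Cell) (s : St) : St :=
  if s.1 - rho (s.2 - s.1) ∉ F then (s.1, s.1 - rho (s.2 - s.1))
  else if (s.1 - rho (s.2 - s.1)) + (s.2 - s.1) ∈ F then ((s.1 - rho (s.2 - s.1)) + (s.2 - s.1), s.2)
  else (s.1 - rho (s.2 - s.1), s.2 - rho (s.2 - s.1))

lemma rho_rho (w : Cell) : rho (rho w) = -w := by
  simp [rho, Prod.ext_iff]

lemma isdir_rho {w : Cell} (h : IsDir w) : IsDir (rho w) := by
  rcases h with h | h | h | h <;> subst h <;> simp [IsDir, rho, e1, e2, Prod.ext_iff]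

lemma isdir_neg {w : Cell} (h : IsDir w) : IsDir (-w) := by
  rcases h with h | h | h | h <;> subst h <;> simp [IsDir, rho, e1, e2, Prod.ext_iff]

lemma isdir_ne_zero {w : Cell} (h : IsDir w) : w ≠ 0 := by
  rcases h with h | h | h | h <;> subst h <;> simp [e1, e2, Prod.ext_iff]

lemma choice0 {F : Set Cell} {s : St} (c0 : s.1 + tdir s ∉ F) : succF F s = (s.1, s.1 + tdir s) := by
  unfold succF choiceF; rw [if_pos c0]; simp

lemma choice1 {F : Set Cell} {s : St} (c0 : s.1 + tdir s ∈ F) (c1 : s.2 + tdir s ∉ F) :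
    succF F s = (s.1 + tdir s, s.2 + tdir s) := by
  unfold succF choiceF; rw [if_neg (not_not_intro c0), if_pos c1]; simp

lemma choice2 {F : Set Cell} {s : St} (c0 : s.1 + tdir s ∈ F) (c1 : s.2 + tdir s ∈ F) :
    succF F s = (s.2 + tdir s, s.2) := by
  unfold succF choiceF; rw [if_neg (not_not_intro c0), if_neg (not_not_intro c1)]; simp

lemma valid_succ {F : Set Cell} {s : St} (hs : Valid F s) : Valid F (succF F s) := by
  obtain ⟨hd, h1, h2⟩ := hs
  by_cases c0 : s.1 + tdir s ∈ F
  · by_cases c1 : s.2 + tdir s ∈ F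
    · rw [choice2 c0 c1]
      refine ⟨?_, c1, h2⟩
      show IsDir (s.2 - (s.2 + tdir s))
      have h : s.2 - (s.2 + tdir s) = -(tdir s) := by ring
      rw [h]; exact isdir_neg (isdir_rho hd)
    · rw [choice1 c0 c1]
      refine ⟨?_, c0, c1⟩
      show IsDir (s.2 + tdir s - (s.1 + tdir s))
      have h : s.2 + tdir s - (s.1 + tdir s) = s.2 - s.1 := by ring
      rw [h]; exact hd
  · rw [choice0 c0]
    refine ⟨?_, h1, c0⟩
    show IsDir (s.1 + tdir s - s.1)
    have h : s.1 + tdir s - s.1 = tdir s := by ring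
    rw [h]; exact isdir_rho hd

lemma pred_succ {F : Set Cell} {s : St} (hs : Valid F s) : predF F (succF F s) = s := by
  obtain ⟨hd, h1, h2⟩ := hs
  by_cases c0 : s.1 + tdir s ∈ F
  · by_cases c1 : s.2 + tdir s ∈ F
    · rw [choice2 c0 c1]
      unfold predF
      have hw : (s.2 + tdir s, s.2).2 - (s.2 + tdir s, s.2).1 = -(tdir s) := by
        show s.2 - (s.2 + tdir s) = -(tdir s); ring
      rw [hw]
      have hrt : rho (-(tdir s)) = s.2 - s.1 := by
        show rho (-(rho (s.2 - s.1))) = s.2 - s.1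
        have h : rho (-(rho (s.2-s.1))) = - rho (rho (s.2-s.1)) := by simp [rho, Prod.ext_iff]
        rw [h, rho_rho]; ring
      rw [hrt]
      have hA : (s.2 + tdir s, s.2).1 - (s.2 - s.1) = s.1 + tdir s := by
        show s.2 + tdir s - (s.2 - s.1) = s.1 + tdir s; ring
      rw [hA]
      rw [if_neg (not_not_intro c0)]
      have hA2 : s.1 + tdir s + -(tdir s) = s.1 := by ring
      rw [hA2, if_pos h1]
    · rw [choice1 c0 c1]
      unfold predF
      have hw : (s.1 + tdir s, s.2 + tdir s).2 - (s.1 + tdir s, s.2 + tdir s).1 = s.2 - s.1 := by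
        show s.2 + tdir s - (s.1 + tdir s) = s.2 - s.1; ring
      rw [hw]
      have hA : (s.1 + tdir s, s.2 + tdir s).1 - rho (s.2 - s.1) = s.1 := by
        show s.1 + tdir s - rho (s.2 - s.1) = s.1
        show s.1 + rho (s.2 - s.1) - rho (s.2 - s.1) = s.1; ring
      rw [hA]
      rw [if_neg (not_not_intro h1)]
      rw [if_neg (by rw [show s.1 + (s.2 - s.1) = s.2 by ring]; exact h2)]
      have h3 : (s.1 + tdir s, s.2 + tdir s).2 - rho (s.2 - s.1) = s.2 := by
        show s.2 + tdir s - rho (s.2 - s.1) = s.2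
        show s.2 + rho (s.2 - s.1) - rho (s.2 - s.1) = s.2; ring
      rw [h3]
  · rw [choice0 c0]
    unfold predF
    have hw : (s.1, s.1 + tdir s).2 - (s.1, s.1 + tdir s).1 = tdir s := by
      show s.1 + tdir s - s.1 = tdir s; ring
    rw [hw]
    have hA : (s.1, s.1 + tdir s).1 - rho (tdir s) = s.2 := by
      show s.1 - rho (rho (s.2 - s.1)) = s.2
      rw [rho_rho]; ring
    rw [hA]
    rw [if_pos h2]

lemma w_succ_cases (F : Set Cell) (s : St) :
    (succF F s).2 - (succF F s).1 = rho (s.2 - s.1) ∨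
    (succF F s).2 - (succF F s).1 = s.2 - s.1 ∨
    (succF F s).2 - (succF F s).1 = -(rho (s.2 - s.1)) := by
  by_cases c0 : s.1 + tdir s ∈ F
  · by_cases c1 : s.2 + tdir s ∈ F
    · right; right; rw [choice2 c0 c1]; show s.2 - (s.2 + tdir s) = _; unfold tdir; ring
    · right; left; rw [choice1 c0 c1]; show s.2 + tdir s - (s.1 + tdir s) = _; ring
  · left; rw [choice0 c0]; show s.1 + tdir s - s.1 = _; unfold tdir; ring

def vpot (s : St) : Cell :=
  (max s.1.1 s.2.1 + max (-(tdir s).1) 0, max s.1.2 s.2.2 + max (-(tdir s).2) 0)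

lemma v_succ {F : Set Cell} {s : St} (hs : Valid F s) : vpot (succF F s) = vpot s + tdir s := by
  have hd := hs.1
  obtain ⟨⟨a, b⟩, ⟨c, d⟩⟩ := s
  have hsub : (((c,d) : Cell)) - ((a,b) : Cell) = (c - a, d - b) := rfl
  by_cases c0 : (((a,b) : Cell), ((c,d) : Cell)).1 + tdir ((a,b), (c,d)) ∈ F
  · by_cases c1 : (((a,b) : Cell), ((c,d) : Cell)).2 + tdir ((a,b), (c,d)) ∈ F
    · rw [choice2 c0 c1]
      rcases hd with h | h | h | h <;> rw [hsub] at h <;>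
        simp only [e1, e2, Prod.ext_iff, Prod.neg_mk] at h <;>
        obtain ⟨h5, h6⟩ := h <;>
        · simp only [vpot, tdir, rho, Prod.ext_iff, Prod.fst_add, Prod.snd_add,
            Prod.fst_sub, Prod.snd_sub, Prod.mk.injEq, Prod.fst_neg, Prod.snd_neg]
          constructor <;> · simp only [max_def]; split_ifs <;> omega
    · rw [choice1 c0 c1]
      rcases hd with h | h | h | h <;> rw [hsub] at h <;>
        simp only [e1, e2, Prod.ext_iff, Prod.neg_mk] at h <;>
        obtain ⟨h5, h6⟩ := h <;>
        · simp only [vpot, tdir, rho, Prod.ext_iff, Prod.fst_add, Prod.snd_add,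
            Prod.fst_sub, Prod.snd_sub, Prod.mk.injEq, Prod.fst_neg, Prod.snd_neg]
          constructor <;> · simp only [max_def]; split_ifs <;> omega
  · rw [choice0 c0]
    rcases hd with h | h | h | h <;> rw [hsub] at h <;>
      simp only [e1, e2, Prod.ext_iff, Prod.neg_mk] at h <;>
      obtain ⟨h5, h6⟩ := h <;>
      · simp only [vpot, tdir, rho, Prod.ext_iff, Prod.fst_add, Prod.snd_add,
          Prod.fst_sub, Prod.snd_sub, Prod.mk.injEq, Prod.fst_neg, Prod.snd_neg]
        constructor <;> · simp only [max_def]; split_ifs <;> omega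


/-! ## Walk iteration and data extraction -/

def s0def : St := ((0, 0), (0, -1))

lemma iter_valid {F : Set Cell} {s : St} (h0 : Valid F s) : ∀ i, Valid F ((succF F)^[i] s) := by
  intro i; induction i with
  | zero => simpa using h0
  | succ n ih => rw [Function.iterate_succ_apply']; exact valid_succ ih

lemma pred_iter {F : Set Cell} : ∀ (k : ℕ) (x : St), Valid F x →
    (predF F)^[k] ((succF F)^[k] x) = x := by
  intro k
  induction k with
  | zero => intro x _; simp
  | succ n ih =>
    intro x hx
    rw [Function.iterate_succ_apply' (succF F), Function.iterate_succ_apply (predF F)]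
    rw [pred_succ (iter_valid hx n)]
    exact ih x hx

lemma exists_return {F : Set Cell} (hF : F.Finite) {s : St} (h0 : Valid F s) :
    ∃ l, 0 < l ∧ (succF F)^[l] s = s := by
  classical
  have hfin : {t : St | Valid F t}.Finite := by
    have hsub : {t : St | Valid F t} ⊆ F ×ˢ ((fun c => c + e1) '' F ∪ (fun c => c + e2) '' F ∪
        (fun c => c + (-e1)) '' F ∪ (fun c => c + (-e2)) '' F) := by
      rintro ⟨t1, t2⟩ ⟨hd, h1, h2⟩
      refine ⟨h1, ?_⟩
      have ht2 : t2 = t1 + (t2 - t1) := by ring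
      rcases hd with h | h | h | h <;> rw [h] at ht2 <;>
        simp only [Set.mem_union, Set.mem_image] <;>
        [ (exact Or.inl (Or.inl (Or.inl ⟨t1, h1, ht2.symm⟩)));
          (exact Or.inl (Or.inl (Or.inr ⟨t1, h1, ht2.symm⟩)));
          (exact Or.inl (Or.inr ⟨t1, h1, ht2.symm⟩));
          (exact Or.inr ⟨t1, h1, ht2.symm⟩) ]
    exact Set.Finite.subset (Set.Finite.prod hF ((((hF.image _).union (hF.image _)).union
      (hF.image _)).union (hF.image _))) hsub
  obtain ⟨i, -, j, -, hne, heq⟩ := Set.infinite_univ.exists_ne_map_eq_of_mapsTo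
    (f := fun i : ℕ => (succF F)^[i] s) (fun i _ => by exact iter_valid h0 i) hfin
  rcases Nat.lt_or_ge i j with hij | hij
  · refine ⟨j - i, by omega, ?_⟩
    have h1 : (succF F)^[j] s = (succF F)^[i] ((succF F)^[j-i] s) := by
      rw [← Function.iterate_add_apply]
      congr 1; omega
    have h2 : (predF F)^[i] ((succF F)^[i] ((succF F)^[j-i] s)) = (succF F)^[j-i] s :=
      pred_iter i _ (iter_valid h0 (j-i))
    have h3 : (predF F)^[i] ((succF F)^[i] s) = s := pred_iter i s h0
    rw [← h1, ← heq, h3] at h2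
    exact h2.symm
  · have hij' : j < i := by omega
    refine ⟨i - j, by omega, ?_⟩
    have h1 : (succF F)^[i] s = (succF F)^[j] ((succF F)^[i-j] s) := by
      rw [← Function.iterate_add_apply]
      congr 1; omega
    have h2 : (predF F)^[j] ((succF F)^[j] ((succF F)^[i-j] s)) = (succF F)^[i-j] s :=
      pred_iter j _ (iter_valid h0 (i-j))
    have h3 : (predF F)^[j] ((succF F)^[j] s) = s := pred_iter j s h0
    rw [← h1, heq, h3] at h2
    exact h2.symm

/-! ## data side: reconstruction from choice sequences -/

def stS (m : ℕ) (δ : Fin m → Fin 3) : ℕ → St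
  | 0 => s0def
  | i + 1 => cand (stS m δ i) (if h : i < m then δ ⟨i, h⟩ else 0)

def isW (s : St) : Bool := decide (s.2 - s.1 = e1) || decide (s.2 - s.1 = e2)

def wlist (m : ℕ) (δ : Fin m → Fin 3) : List Cell :=
  ((List.range (m+1)).filter (fun i => isW (stS m δ i))).map (fun i => (stS m δ i).2)

def farB (R : ℤ) (p q : Cell) : Bool := decide (R < |q.1 - p.1| + |q.2 - p.2|)

def sepAux (R : ℤ) : ℕ → List Cell → List Cell
  | 0, _ => []
  | _+1, [] => []
  | n+1, p :: rest => p :: sepAux R n (rest.filter (farB R p))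

noncomputable def keptList (N m : ℕ) (δ : Fin m → Fin 3) : List Cell :=
  sepAux (2*N) (wlist m δ).length (wlist m δ)

lemma mem_sepAux {R : ℤ} : ∀ {n : ℕ} {L : List Cell} {c : Cell}, c ∈ sepAux R n L → c ∈ L := by
  intro n
  induction n with
  | zero => intro L c h; simp [sepAux] at h
  | succ n ih =>
    intro L c h
    match L with
    | [] => simp [sepAux] at h
    | p :: rest =>
      simp only [sepAux, List.mem_cons] at h ⊢
      rcases h with h | h
      · exact Or.inl h
      · exact Or.inr (List.mem_of_mem_filter (ih h))

lemma pairwise_sepAux {R : ℤ} : ∀ {n : ℕ} {L : List Cell},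
    (sepAux R n L).Pairwise (fun p q => R < |q.1 - p.1| + |q.2 - p.2|) := by
  intro n
  induction n with
  | zero => intro L; simp [sepAux]
  | succ n ih =>
    intro L
    match L with
    | [] => simp [sepAux]
    | p :: rest =>
      simp only [sepAux]
      refine List.Pairwise.cons ?_ ih
      intro q hq
      have := List.mem_filter.mp (mem_sepAux hq)
      simpa [farB] using this.2

lemma cover_sepAux {R : ℤ} (hR : 0 ≤ R) : ∀ (n : ℕ) (L : List Cell), L.length ≤ n →
    ∀ q ∈ L, ∃ p ∈ sepAux R n L, |q.1 - p.1| + |q.2 - p.2| ≤ R := by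
  intro n
  induction n with
  | zero => intro L hL q hq; rw [Nat.le_zero, List.length_eq_zero_iff] at hL; subst hL; simp at hq
  | succ n ih =>
    intro L hL q hq
    match L with
    | [] => simp at hq
    | p :: rest =>
      simp only [List.mem_cons] at hq
      rcases hq with heq | hq
      · refine ⟨p, by simp [sepAux], ?_⟩
        rw [heq]; simp [hR]
      · by_cases hfar : R < |q.1 - p.1| + |q.2 - p.2|
        · have hqf : q ∈ rest.filter (farB R p) := by
            rw [List.mem_filter]
            exact ⟨hq, by simp [farB, hfar]⟩
          have hlen : (rest.filter (farB R p)).length ≤ n := by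
            have := List.length_filter_le (farB R p) rest
            simp only [List.length_cons] at hL
            omega
          obtain ⟨p', hp', hd⟩ := ih _ hlen q hqf
          exact ⟨p', by simp [sepAux, hp'], hd⟩
        · exact ⟨p, by simp [sepAux], by omega⟩

lemma list_toFinset_map {α β : Type*} [DecidableEq α] [DecidableEq β] (l : List α) (f : α → β) :
    (l.map f).toFinset = l.toFinset.image f := by
  ext x; simp

lemma list_toFinset_range (n : ℕ) : (List.range n).toFinset = Finset.range n := by
  ext x; simp

lemma sep_count {R : ℤ} (hR : 0 ≤ R) (n : ℕ) (L : List Cell) (hL : L.length ≤ n) :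
    L.toFinset.card ≤ ((R + R + 1).toNat)^2 * (sepAux R n L).length := by
  classical
  have hsub : L.toFinset ⊆ (sepAux R n L).toFinset.biUnion
      (fun p => Finset.Icc (p - (R, R)) (p + (R, R))) := by
    intro q hq
    rw [List.mem_toFinset] at hq
    obtain ⟨p, hp, hd⟩ := cover_sepAux hR n L hL q hq
    rw [Finset.mem_biUnion]
    refine ⟨p, List.mem_toFinset.mpr hp, ?_⟩
    have hd1 : |q.1 - p.1| ≤ R := by linarith [abs_nonneg (q.2 - p.2)]
    have hd2 : |q.2 - p.2| ≤ R := by linarith [abs_nonneg (q.1 - p.1)]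
    obtain ⟨l1, r1⟩ := abs_le.mp hd1
    obtain ⟨l2, r2⟩ := abs_le.mp hd2
    rw [Finset.mem_Icc, Prod.le_def, Prod.le_def]
    refine ⟨⟨?_, ?_⟩, ?_, ?_⟩ <;>
      simp only [Prod.fst_sub, Prod.snd_sub, Prod.fst_add, Prod.snd_add] <;> linarith
  calc L.toFinset.card ≤ _ := Finset.card_le_card hsub
    _ ≤ ∑ p ∈ (sepAux R n L).toFinset, (Finset.Icc (p - (R, R)) (p + (R, R))).card :=
        Finset.card_biUnion_le
    _ = ∑ p ∈ (sepAux R n L).toFinset, ((R+R+1).toNat)^2 := by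
        refine Finset.sum_congr rfl ?_
        intro p _
        rw [Finset.Icc_prod_def, Finset.card_product]
        simp only [Int.card_Icc, Prod.fst_sub, Prod.snd_sub, Prod.fst_add, Prod.snd_add]
        have h1 : p.1 + (R,R).1 + 1 - (p.1 - (R,R).1) = R + R + 1 := by simp; ring
        have h2 : p.2 + (R,R).2 + 1 - (p.2 - (R,R).2) = R + R + 1 := by simp; ring
        rw [h1, h2]; ring
    _ = ((R+R+1).toNat)^2 * (sepAux R n L).toFinset.card := by
        rw [Finset.sum_const, smul_eq_mul, mul_comm]
    _ ≤ _ := by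
        exact Nat.mul_le_mul_left _ (List.toFinset_card_le _)


lemma exists_data {F : Set Cell} (hF : F.Finite) (h0 : Valid F s0def) (N : ℕ) :
    ∃ (m : ℕ) (δ : Fin m → Fin 3), 3 ≤ m ∧
      m + 1 ≤ 4 * ((4*N+1)^2) * (keptList N m δ).length ∧
      ∀ c ∈ keptList N m δ, c ∉ F ∧ (c - e1 ∈ F ∨ c - e2 ∈ F) := by
  classical
  obtain hex := exists_return hF h0
  set l := Nat.find hex with hldef
  obtain ⟨hlpos, hret⟩ : 0 < l ∧ (succF F)^[l] s0def = s0def := Nat.find_spec hex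
  have hmin : ∀ k, k < l → ¬(0 < k ∧ (succF F)^[k] s0def = s0def) := fun k hk => Nat.find_min hex hk
  set S : ℕ → St := fun i => (succF F)^[i] s0def with hSdef
  have hvalid : ∀ i, Valid F (S i) := iter_valid h0
  have hS0 : S 0 = s0def := rfl
  have hSsucc : ∀ i, S (i+1) = succF F (S i) := fun i => Function.iterate_succ_apply' _ _ _
  -- injectivity on [0, l)
  have haux : ∀ i j, i < j → j < l → S i ≠ S j := by
    intro i j hij hjl heq
    have h1 : (succF F)^[l - j] (S j) = s0def := by
      show (succF F)^[l - j] ((succF F)^[j] s0def) = s0def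
      rw [← Function.iterate_add_apply]
      rw [show l - j + j = l by omega]
      exact hret
    have h2 : S (l - j + i) = s0def := by
      show (succF F)^[l - j + i] s0def = s0def
      rw [Function.iterate_add_apply]
      calc (succF F)^[l-j] ((succF F)^[i] s0def) = (succF F)^[l-j] (S j) := by
            show (succF F)^[l-j] (S i) = _
            rw [heq]
        _ = s0def := h1
    exact hmin (l - j + i) (by omega) ⟨by omega, h2⟩
  have hinj : ∀ i, i < l → ∀ j, j < l → S i = S j → i = j := by
    intro i hi j hj heq
    rcases Nat.lt_trichotomy i j with h | h | h
    · exact absurd heq (haux i j h hj)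
    · exact h
    · exact absurd heq.symm (haux j i h hi)
  -- telescoping
  set w : ℕ → Cell := fun i => (S i).2 - (S i).1 with hwdef
  have hw : ∀ i, IsDir (w i) := fun i => (hvalid i).1
  have htel : ∑ i ∈ Finset.range l, tdir (S i) = 0 := by
    have heq : ∀ i, vpot (S (i+1)) - vpot (S i) = tdir (S i) := by
      intro i
      rw [hSsucc i, v_succ (hvalid i)]; ring
    calc ∑ i ∈ Finset.range l, tdir (S i)
        = ∑ i ∈ Finset.range l, (vpot (S (i+1)) - vpot (S i)) :=
          Finset.sum_congr rfl (fun i _ => (heq i).symm)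
      _ = vpot (S l) - vpot (S 0) := Finset.sum_range_sub (fun i => vpot (S i)) l
      _ = 0 := by
          have : S l = S 0 := by rw [hS0]; exact hret
          rw [this]; ring
  have htdir : ∀ i, tdir (S i) = ((w i).2, -(w i).1) := by
    intro i
    simp only [hwdef]
    rfl
  have hc1 : ∑ i ∈ Finset.range l, (w i).1 = 0 := by
    have h2 := congrArg Prod.snd htel
    rw [Prod.snd_sum] at h2
    simp only [htdir] at h2
    have : ∑ i ∈ Finset.range l, (-(w i).1) = 0 := h2
    rw [Finset.sum_neg_distrib] at this
    omega
  have hc2 : ∑ i ∈ Finset.range l, (w i).2 = 0 := by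
    have h1 := congrArg Prod.fst htel
    rw [Prod.fst_sum] at h1
    simp only [htdir] at h1
    exact h1
  -- counts
  set n1 := ((Finset.range l).filter (fun i => w i = e1)).card with hn1
  set n2 := ((Finset.range l).filter (fun i => w i = e2)).card with hn2
  set n3 := ((Finset.range l).filter (fun i => w i = -e1)).card with hn3
  set n4 := ((Finset.range l).filter (fun i => w i = -e2)).card with hn4
  have hkey1 : ∀ i ∈ Finset.range l, (w i).1
      = (if w i = e1 then (1:ℤ) else 0) - (if w i = -e1 then 1 else 0) := by
    intro i _
    rcases hw i with h|h|h|h <;> rw [h] <;> norm_num [e1, e2, Prod.ext_iff]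
  have hkey2 : ∀ i ∈ Finset.range l, (w i).2
      = (if w i = e2 then (1:ℤ) else 0) - (if w i = -e2 then 1 else 0) := by
    intro i _
    rcases hw i with h|h|h|h <;> rw [h] <;> norm_num [e1, e2, Prod.ext_iff]
  have hkey3 : ∀ i ∈ Finset.range l, (1:ℤ)
      = (if w i = e1 then (1:ℤ) else 0) + (if w i = e2 then 1 else 0)
        + (if w i = -e1 then 1 else 0) + (if w i = -e2 then 1 else 0) := by
    intro i _
    rcases hw i with h|h|h|h <;> rw [h] <;> norm_num [e1, e2, Prod.ext_iff]
  have hs1 : (n1 : ℤ) = n3 := by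
    have := (Finset.sum_congr rfl hkey1) ▸ hc1
    rw [Finset.sum_sub_distrib, Finset.sum_boole, Finset.sum_boole] at this
    rw [hn1, hn3]
    omega
  have hs2 : (n2 : ℤ) = n4 := by
    have := (Finset.sum_congr rfl hkey2) ▸ hc2
    rw [Finset.sum_sub_distrib, Finset.sum_boole, Finset.sum_boole] at this
    rw [hn2, hn4]
    omega
  have hs3 : (l : ℤ) = n1 + n2 + n3 + n4 := by
    have h := Finset.sum_congr rfl hkey3
    rw [Finset.sum_add_distrib, Finset.sum_add_distrib, Finset.sum_add_distrib,
      Finset.sum_boole, Finset.sum_boole, Finset.sum_boole, Finset.sum_boole,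
      Finset.sum_const, Finset.card_range] at h
    rw [hn1, hn2, hn3, hn4]
    simpa using h
  set Wset := (Finset.range l).filter (fun i => w i = e1 ∨ w i = e2) with hWdef
  have hWcard : Wset.card = n1 + n2 := by
    rw [hWdef, Finset.filter_or, Finset.card_union_of_disjoint, hn1, hn2]
    rw [Finset.disjoint_filter]
    intro i _ h1 h2
    rw [h1] at h2
    simp [e1, e2, Prod.ext_iff] at h2
  have hleven : l = 2 * Wset.card := by omega
  -- l ≠ 2
  have hlne2 : l ≠ 2 := by
    intro h2
    have hsum01 : w 0 + w 1 = 0 := by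
      have ha : (w 0).1 + (w 1).1 = 0 := by
        have := hc1; rw [h2] at this
        rw [Finset.sum_range_succ, Finset.sum_range_one] at this
        linarith
      have hb : (w 0).2 + (w 1).2 = 0 := by
        have := hc2; rw [h2] at this
        rw [Finset.sum_range_succ, Finset.sum_range_one] at this
        linarith
      rw [Prod.ext_iff]
      constructor <;> simp only [Prod.fst_add, Prod.snd_add, Prod.fst_zero, Prod.snd_zero] <;> omega
    have hcases := w_succ_cases F (S 0)
    rw [← hSsucc 0] at hcases
    have hw1 : w 1 = -(w 0) := by
      have := hsum01
      rw [Prod.ext_iff] at this ⊢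
      simp only [Prod.fst_add, Prod.snd_add, Prod.fst_zero, Prod.snd_zero] at this
      simp only [Prod.fst_neg, Prod.snd_neg]
      omega
    rcases hw 0 with h|h|h|h <;> rcases hcases with hc|hc|hc <;>
      rw [show (S 1).2 - (S 1).1 = w 1 from rfl, show (S 0).2 - (S 0).1 = w 0 from rfl] at hc <;>
      rw [hw1, h] at hc <;>
      simp [rho, e1, e2, Prod.ext_iff] at hc
  have hl4 : 4 ≤ l := by omega
  -- image fibers
  set img := Wset.image (fun i => (S i).2) with himgdef
  have hfib : ∀ a ∈ img, (Wset.filter (fun i => (S i).2 = a)).card ≤ 2 := by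
    intro a _
    have : (Wset.filter (fun i => (S i).2 = a)).card ≤ (Finset.univ : Finset Bool).card := by
      apply Finset.card_le_card_of_injOn (fun i => decide (w i = e1))
      · intro i _; exact Finset.mem_univ _
      · intro i hi j hj hd
        simp only [Finset.coe_filter, Set.mem_setOf_eq] at hi hj
        obtain ⟨hiW, hia⟩ := hi
        obtain ⟨hjW, hja⟩ := hj
        rw [hWdef, Finset.mem_filter, Finset.mem_range] at hiW hjW
        have hd' : decide (w i = e1) = decide (w j = e1) := hd
        have hwij : w i = w j := by
          by_cases hi1 : w i = e1
          · have : decide (w j = e1) = true := by rw [← hd']; simp [hi1]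
            rw [hi1]; exact (of_decide_eq_true this).symm
          · have hj1 : ¬ (w j = e1) := by
              intro hj1
              have : decide (w i = e1) = true := by rw [hd']; simp [hj1]
              exact hi1 (of_decide_eq_true this)
            have hie2 : w i = e2 := (hiW.2).resolve_left hi1
            have hje2 : w j = e2 := (hjW.2).resolve_left hj1
            rw [hie2, hje2]
        have hSij : S i = S j := by
          have h1 : (S i).1 = (S i).2 - w i := by rw [hwdef]; ring
          have h2 : (S j).1 = (S j).2 - w j := by rw [hwdef]; ring
          rw [Prod.ext_iff]
          refine ⟨?_, by rw [hia, hja]⟩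
          rw [h1, h2, hia, hja, hwij]
        exact hinj i hiW.1 j hjW.1 hSij
    simpa using this
  have himgle : Wset.card ≤ 2 * img.card := Finset.card_le_mul_card_image _ 2 hfib
  -- the data
  set m := l - 1 with hmdef
  have hm1 : m + 1 = l := by omega
  set δ : Fin m → Fin 3 := fun i => choiceF F (S i.1) with hδdef
  have hstS : ∀ i, i ≤ m → stS m δ i = S i := by
    intro i
    induction i with
    | zero => intro _; rfl
    | succ i ih =>
      intro hi
      have him : i < m := by omega
      show cand (stS m δ i) (if h : i < m then δ ⟨i, h⟩ else 0) = S (i+1)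
      rw [dif_pos him, ih (by omega), hSsucc i]
      rfl
  have hwl : wlist m δ = ((List.range l).filter (fun i => isW (S i))).map (fun i => (S i).2) := by
    unfold wlist
    have hfeq : (List.range (m+1)).filter (fun i => isW (stS m δ i))
        = (List.range l).filter (fun i => isW (S i)) := by
      rw [hm1]
      apply List.filter_congr
      intro a ha
      rw [List.mem_range] at ha
      rw [hstS a (by omega)]
    rw [hfeq]
    apply List.map_congr_left
    intro a ha
    have ha' : a ∈ List.range l := List.mem_of_mem_filter ha
    rw [List.mem_range] at ha'
    rw [hstS a (by omega)]
  have htF : (wlist m δ).toFinset = img := by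
    rw [hwl, list_toFinset_map, List.toFinset_filter, list_toFinset_range, himgdef]
    congr 1
    rw [hWdef]
    apply Finset.filter_congr
    intro i _
    simp [isW, hwdef]
  -- counting chain
  set wl := wlist m δ with hwldef
  have hcnt : wl.toFinset.card ≤ ((4*N+1)^2) * (keptList N m δ).length := by
    have h := sep_count (R := (2*(N:ℤ))) (by positivity) wl.length wl le_rfl
    have hbox : (((2*(N:ℤ)) + (2*(N:ℤ)) + 1).toNat)^2 = (4*N+1)^2 := by
      congr 1
      omega
    rw [hbox] at h
    have hke : keptList N m δ = sepAux (2*(N:ℤ)) wl.length wl := by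
      rw [keptList, hwldef]
    rw [hke]
    exact h
  have hchain : m + 1 ≤ 4 * ((4*N+1)^2) * (keptList N m δ).length := by
    have h1 : m + 1 ≤ 4 * img.card := by
      rw [hm1]
      omega
    have h2 : img.card ≤ ((4*N+1)^2) * (keptList N m δ).length := by
      rw [← htF]
      exact hcnt
    calc m + 1 ≤ 4 * img.card := h1
      _ ≤ 4 * (((4*N+1)^2) * (keptList N m δ).length) := by
          exact Nat.mul_le_mul_left 4 h2
      _ = 4 * ((4*N+1)^2) * (keptList N m δ).length := by ring
  refine ⟨m, δ, by omega, hchain, ?_⟩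
  intro c hc
  have hcwl : c ∈ wl := mem_sepAux hc
  rw [hwl, List.mem_map] at hcwl
  obtain ⟨i, hi, hceq⟩ := hcwl
  rw [List.mem_filter] at hi
  obtain ⟨hirange, hiW⟩ := hi
  have hwi : w i = e1 ∨ w i = e2 := by
    have := hiW
    simp only [isW, Bool.or_eq_true, decide_eq_true_eq] at this
    exact this
  have hv := hvalid i
  constructor
  · rw [← hceq]; exact hv.2.2
  · have h1 : (S i).1 = c - w i := by rw [← hceq, hwdef]; ring
    rcases hwi with h | h
    · left; rw [h] at h1; rw [← h1]; exact hv.2.1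
    · right; rw [h] at h1; rw [← h1]; exact hv.2.1


/-! ## Percolation cluster in rotated coordinates -/

def toSite (c : Cell) : ℤ × ℕ := (c.1 - c.2, (c.1 + c.2).toNat)

def Cset {Ω : Type*} (op : ℤ → ℕ → Set Ω) (ω : Ω) : Set Cell :=
  {c | 0 ≤ c.1 + c.2 ∧ Reaches op ω 0 0 (c.1 - c.2) (c.1 + c.2).toNat}

lemma origin_mem {Ω : Type*} {op : ℤ → ℕ → Set Ω} {ω : Ω} (hop : ω ∈ op 0 0) :
    ((0,0) : Cell) ∈ Cset op ω := by
  constructor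
  · norm_num
  · show Reaches op ω 0 0 (((0:ℤ),(0:ℤ)).1 - ((0:ℤ),(0:ℤ)).2) ((((0:ℤ),(0:ℤ)).1 + ((0:ℤ),(0:ℤ)).2).toNat)
    have h1 : ((0:ℤ),(0:ℤ)).1 - ((0:ℤ),(0:ℤ)).2 = 0 := by norm_num
    have h2 : ((((0:ℤ),(0:ℤ)).1 + ((0:ℤ),(0:ℤ)).2).toNat) = 0 := by norm_num
    rw [h1, h2]
    refine ⟨fun _ => 0, rfl, rfl, ?_, ?_⟩
    · intro k hk1 hk2; omega
    · intro k hk1 hk2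
      have hk : k = 0 := by omega
      subst hk; simpa using hop

lemma child_closed {Ω : Type*} {op : ℤ → ℕ → Set Ω} {ω : Ω} {c : Cell} (hc : c ∈ Cset op ω)
    (e : Cell) (he : e = e1 ∨ e = e2) (hnc : c + e ∉ Cset op ω) :
    ω ∉ op ((c+e).1 - (c+e).2) ((c+e).1 + (c+e).2).toNat := by
  intro hop
  apply hnc
  obtain ⟨hpos, f, hf0, hfn, hstep, hopen⟩ := hc
  set n := (c.1 + c.2).toNat with hn
  have hnc2 : (n : ℤ) = c.1 + c.2 := by rw [hn]; exact Int.toNat_of_nonneg hpos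
  have hsum : (c+e).1 + (c+e).2 = c.1 + c.2 + 1 := by
    rcases he with h|h <;> subst h <;> simp [e1, e2] <;> ring
  have hn' : ((c+e).1 + (c+e).2).toNat = n + 1 := by omega
  have hx' : ((c+e).1 - (c+e).2 = (c.1 - c.2) + 1 ∧ e = e1) ∨
      ((c+e).1 - (c+e).2 = (c.1 - c.2) - 1 ∧ e = e2) := by
    rcases he with h|h <;> subst h
    · left; constructor; · simp [e1]; ring
      · rfl
    · right; constructor; · simp [e2]; ring
      · rfl
  refine ⟨by omega, ?_⟩
  rw [hn']
  refine ⟨fun k => if k ≤ n then f k else (c+e).1 - (c+e).2, by simpa using hf0, by simp, ?_, ?_⟩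
  · intro k hk1 hk2
    by_cases hk : k ≤ n
    · have hk' : k - 1 ≤ n := by omega
      simp only [if_pos hk, if_pos hk']
      exact hstep k hk1 hk
    · have hkeq : k = n + 1 := by omega
      subst hkeq
      have h1 : ¬ (n + 1 ≤ n) := by omega
      have h2 : n + 1 - 1 ≤ n := by omega
      simp only [if_neg h1, if_pos h2]
      have h3 : f (n + 1 - 1) = c.1 - c.2 := by
        have : n + 1 - 1 = n := by omega
        rw [this, hfn]
      rw [h3]
      rcases hx' with ⟨h4, _⟩ | ⟨h4, _⟩
      · left; rw [h4]; ring
      · right; rw [h4]; ring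
  · intro k hk1 hk2
    by_cases hk : k ≤ n
    · simp only [if_pos hk]
      exact hopen k (by omega) hk
    · have hkeq : k = n + 1 := by omega
      subst hkeq
      simp only [if_neg hk]
      rw [← hn']
      exact hop

lemma cset_finite {Ω : Type*} {op : ℤ → ℕ → Set Ω} {ω : Ω}
    (h : {q : ℤ × ℕ | Even (q.1 + (q.2:ℤ)) ∧ Reaches op ω 0 0 q.1 q.2}.Finite) :
    (Cset op ω).Finite := by
  apply Set.Finite.subset
    (h.image (fun q : ℤ × ℕ => (((q.2:ℤ) + q.1)/2, ((q.2:ℤ) - q.1)/2)))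
  rintro ⟨u, v⟩ ⟨hpos, hr⟩
  refine ⟨(u - v, (u+v).toNat), ⟨?_, ?_⟩, ?_⟩
  · show Even ((u - v) + (((u+v).toNat : ℕ) : ℤ))
    have ht : (((u+v).toNat : ℕ) : ℤ) = u + v := Int.toNat_of_nonneg hpos
    rw [ht]
    exact ⟨u, by ring⟩
  · exact hr
  · have ht : (((u+v).toNat : ℕ) : ℤ) = u + v := Int.toNat_of_nonneg hpos
    simp only [Prod.mk.injEq]
    constructor
    · show ((((u+v).toNat : ℕ) : ℤ) + (u - v)) / 2 = u
      rw [ht, show (u+v) + (u-v) = 2 * u by ring]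
      exact Int.mul_ediv_cancel_left u (by norm_num)
    · show ((((u+v).toNat : ℕ) : ℤ) - (u - v)) / 2 = v
      rw [ht, show (u+v) - (u-v) = 2 * v by ring]
      exact Int.mul_ediv_cancel_left v (by norm_num)

/-! ## The outside region -/

def AdjC (a b : Cell) : Prop := b - a = e1 ∨ b - a = e2 ∨ b - a = -e1 ∨ b - a = -e2

def relC (C : Set Cell) (a b : Cell) : Prop := AdjC a b ∧ b ∉ C

def Uset (C : Set Cell) : Set Cell :=
  {c | c ∉ C ∧ ∃ d : Cell, d.1 + d.2 < 0 ∧ Relation.ReflTransGen (relC C) c d}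

def Fset (C : Set Cell) : Set Cell := (Uset C)ᶜ

lemma uset_not_mem {C : Set Cell} {c : Cell} (h : c ∈ Uset C) : c ∉ C := h.1

lemma lower_mem_uset {C : Set Cell} (hupper : ∀ c ∈ C, 0 ≤ c.1 + c.2) {c : Cell}
    (hc : c.1 + c.2 < 0) : c ∈ Uset C := by
  refine ⟨fun hmem => by have := hupper c hmem; omega, c, hc, Relation.ReflTransGen.refl⟩

lemma u_step {C : Set Cell} {c c' : Cell} (hc : c ∈ Uset C) (hc' : c' ∉ C) (hadj : AdjC c' c) :
    c' ∈ Uset C := by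
  obtain ⟨hcn, d, hd, hpath⟩ := hc
  exact ⟨hc', d, hd, Relation.ReflTransGen.head ⟨hadj, hcn⟩ hpath⟩

lemma cset_sub_fset {C : Set Cell} : C ⊆ Fset C := fun c hc hu => (uset_not_mem hu) hc

lemma fset_upper {C : Set Cell} (hupper : ∀ c ∈ C, 0 ≤ c.1 + c.2) {c : Cell}
    (hc : c ∈ Fset C) : 0 ≤ c.1 + c.2 := by
  by_contra h
  exact hc (lower_mem_uset hupper (by omega))

lemma fcell_mem_C {C : Set Cell} {x y : Cell} (hx : x ∈ Fset C) (hy : y ∉ Fset C)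
    (hadj : AdjC x y) : x ∈ C := by
  by_contra hxc
  exact hx (u_step (not_not.mp (fun h => hy h)) hxc hadj)

lemma vert_walk {C : Set Cell} {u v : ℤ} (hout : ∀ j : ℕ, ((u, v - (j:ℤ)) : Cell) ∉ C) :
    ∀ k : ℕ, Relation.ReflTransGen (relC C) (u, v) (u, v - (k:ℤ)) := by
  intro k
  induction k with
  | zero => simpa using Relation.ReflTransGen.refl
  | succ k ih =>
    refine Relation.ReflTransGen.tail ih ⟨?_, hout (k+1)⟩
    right; right; right
    rw [Prod.mk_sub_mk]
    have h2 : v - ((k+1:ℕ):ℤ) - (v - (k:ℤ)) = -1 := by push_cast; ring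
    rw [sub_self, h2]
    rfl

lemma horiz_walk {C : Set Cell} {u v : ℤ} (hout : ∀ j : ℕ, ((u + (j:ℤ), v) : Cell) ∉ C) :
    ∀ k : ℕ, Relation.ReflTransGen (relC C) (u, v) (u + (k:ℤ), v) := by
  intro k
  induction k with
  | zero => simpa using Relation.ReflTransGen.refl
  | succ k ih =>
    refine Relation.ReflTransGen.tail ih ⟨?_, hout (k+1)⟩
    left
    rw [Prod.mk_sub_mk]
    have h2 : u + ((k+1:ℕ):ℤ) - (u + (k:ℤ)) = 1 := by push_cast; ring
    rw [sub_self, h2]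
    rfl

lemma fset_finite {C : Set Cell} (hCfin : C.Finite) (hupper : ∀ c ∈ C, 0 ≤ c.1 + c.2) :
    (Fset C).Finite := by
  classical
  obtain ⟨M0, hM0⟩ := (hCfin.image (fun c => max |c.1| |c.2|)).bddAbove
  set M := max M0 0 with hMdef
  have hM : ∀ c ∈ C, -M ≤ c.1 ∧ c.1 ≤ M ∧ -M ≤ c.2 ∧ c.2 ≤ M := by
    intro c hc
    have h : max |c.1| |c.2| ≤ M0 := hM0 (Set.mem_image_of_mem _ hc)
    have h1 : |c.1| ≤ M := le_trans (le_trans (le_max_left _ _) h) (le_max_left _ _)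
    have h2 : |c.2| ≤ M := le_trans (le_trans (le_max_right _ _) h) (le_max_left _ _)
    obtain ⟨a1, a2⟩ := abs_le.mp h1
    obtain ⟨b1, b2⟩ := abs_le.mp h2
    exact ⟨a1, a2, b1, b2⟩
  have hbox : Fset C ⊆ Set.Icc ((-M, -M) : Cell) ((M, M) : Cell) := by
    intro c hc
    by_contra hout
    have houtside : ¬ (-M ≤ c.1 ∧ c.1 ≤ M ∧ -M ≤ c.2 ∧ c.2 ≤ M) := by
      intro ⟨a1, a2, b1, b2⟩
      exact hout (by rw [Set.mem_Icc, Prod.le_def, Prod.le_def]; exact ⟨⟨a1, b1⟩, a2, b2⟩)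
    have hcnotC : c ∉ C := by
      intro h
      exact houtside (hM c h)
    apply hc
    by_cases h1 : c.1 < -M ∨ M < c.1
    · -- vertical walk down
      have hout1 : ∀ j : ℕ, ((c.1, c.2 - (j:ℤ)) : Cell) ∉ C := by
        intro j hmem
        obtain ⟨a1, a2, -, -⟩ := hM _ hmem
        simp only at a1 a2
        omega
      set k := (c.1 + c.2 + 1).toNat with hk
      have hk2 : c.1 + (c.2 - (k:ℤ)) < 0 := by
        have := Int.self_le_toNat (c.1 + c.2 + 1)
        omega
      exact ⟨hcnotC, (c.1, c.2 - (k:ℤ)), by simpa using hk2, vert_walk hout1 k⟩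
    · push_neg at h1
      by_cases h3 : c.2 ≤ M
      · -- then c.2 < -M, sum is negative
        have h5 : c.2 < -M := by
          rcases not_and_or.mp houtside with h | h
          · omega
          · rcases not_and_or.mp h with h | h
            · omega
            · rcases not_and_or.mp h with h | h
              · omega
              · omega
        have hMnn : 0 ≤ M := le_max_right _ _
        exact lower_mem_uset hupper (by omega)
      · push_neg at h3
        have hout1 : ∀ j : ℕ, ((c.1 + (j:ℤ), c.2) : Cell) ∉ C := by
          intro j hmem
          obtain ⟨-, -, -, b2⟩ := hM _ hmem
          simp only at b2
          omega
        set jr := (M + 1 - c.1).toNat with hjr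
        have hjr2 : M < c.1 + (jr:ℤ) := by
          have := Int.self_le_toNat (M + 1 - c.1)
          omega
        have hpath1 := horiz_walk hout1 jr
        have hout2 : ∀ j : ℕ, ((c.1 + (jr:ℤ), c.2 - (j:ℤ)) : Cell) ∉ C := by
          intro j hmem
          obtain ⟨-, a2, -, -⟩ := hM _ hmem
          simp only at a2
          omega
        set k := (c.1 + (jr:ℤ) + c.2 + 1).toNat with hk
        have hk2 : c.1 + (jr:ℤ) + (c.2 - (k:ℤ)) < 0 := by
          have := Int.self_le_toNat (c.1 + (jr:ℤ) + c.2 + 1)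
          omega
        exact ⟨hcnotC, (c.1 + (jr:ℤ), c.2 - (k:ℤ)), by simpa using hk2,
          Relation.ReflTransGen.trans hpath1 (vert_walk hout2 k)⟩
  exact Set.Finite.subset (Set.finite_Icc _ _) hbox

/-! ## Good data and covering -/

noncomputable def IFin (N m : ℕ) (δ : Fin m → Fin 3) : Finset (ℤ × ℕ) :=
  ((keptList N m δ).map toSite).toFinset

def GoodD (N m : ℕ) (δ : Fin m → Fin 3) : Prop :=
  3 ≤ m ∧ m + 1 ≤ 4 * ((4*N+1)^2) * (IFin N m δ).card ∧
  (∀ p ∈ IFin N m δ, Even (p.1 + (p.2 : ℤ))) ∧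
  (∀ p ∈ IFin N m δ, ∀ q ∈ IFin N m δ, p ≠ q →
    (2 * N : ℤ) < max |p.1 - q.1| |(p.2:ℤ) - (q.2:ℤ)|)

lemma abs_add_le_max (a b : ℤ) : |a| + |b| ≤ max |a-b| |a+b| := by
  rcases abs_cases a with ⟨h1, _⟩ | ⟨h1, _⟩ <;> rcases abs_cases b with ⟨h2, _⟩ | ⟨h2, _⟩
  · exact le_max_of_le_right (by rw [h1, h2]; exact le_abs_self _)
  · exact le_max_of_le_left (by rw [h1, h2]; linarith [le_abs_self (a-b)])
  · exact le_max_of_le_left (by rw [h1, h2]; linarith [neg_le_abs (a-b)])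
  · exact le_max_of_le_right (by rw [h1, h2]; linarith [neg_le_abs (a+b)])

lemma cover_lemma {Ω : Type*} {op : ℤ → ℕ → Set Ω} {ω : Ω} {N : ℕ} (hN : 0 < N)
    (hfin : {q : ℤ × ℕ | Even (q.1 + (q.2:ℤ)) ∧ Reaches op ω 0 0 q.1 q.2}.Finite)
    (hop : ω ∈ op 0 0) :
    ∃ (m : ℕ) (δ : Fin m → Fin 3), GoodD N m δ ∧ ∀ p ∈ IFin N m δ, ω ∈ (op p.1 p.2)ᶜ := by
  classical
  set C := Cset op ω with hCdef
  have hupper : ∀ c ∈ C, 0 ≤ c.1 + c.2 := fun c hc => hc.1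
  have hCfin : C.Finite := cset_finite hfin
  set F := Fset C with hFdef
  have hF : F.Finite := fset_finite hCfin hupper
  have h0 : Valid F s0def := by
    refine ⟨?_, ?_, ?_⟩
    · show IsDir (((0:ℤ),(-1:ℤ)) - ((0:ℤ),(0:ℤ)))
      right; right; right
      rw [Prod.mk_sub_mk]
      norm_num
      rfl
    · exact cset_sub_fset (origin_mem hop)
    · intro hmem
      exact hmem (lower_mem_uset hupper (by decide))
  obtain ⟨m, δ, h3m, hchain, hmem⟩ := exists_data hF h0 N
  -- basic facts about kept cells
  have hkey : ∀ c ∈ keptList N m δ, 1 ≤ c.1 + c.2 ∧ c ∉ C ∧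
      ω ∉ op (c.1 - c.2) ((c.1 + c.2).toNat) := by
    intro c hc
    obtain ⟨hcF, hce⟩ := hmem c hc
    have hcU : c ∈ Uset C := not_not.mp hcF
    have hcnC : c ∉ C := uset_not_mem hcU
    obtain ⟨e, he, heF⟩ : ∃ e : Cell, (e = e1 ∨ e = e2) ∧ c - e ∈ F := by
      rcases hce with h | h
      · exact ⟨e1, Or.inl rfl, h⟩
      · exact ⟨e2, Or.inr rfl, h⟩
    have hadj : AdjC (c - e) c := by
      rcases he with h | h <;> subst h
      · left; rw [sub_sub_cancel]
      · right; left; rw [sub_sub_cancel]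
    have hceC : c - e ∈ C := fcell_mem_C heF hcF hadj
    have hsum0 : 0 ≤ (c-e).1 + (c-e).2 := hupper _ hceC
    have hsum : (c-e).1 + (c-e).2 + 1 = c.1 + c.2 := by
      rcases he with h | h <;> subst h <;>
        simp only [Prod.fst_sub, Prod.snd_sub, e1, e2] <;> ring
    have hclosed := child_closed hceC e he (by rw [sub_add_cancel]; exact hcnC)
    rw [sub_add_cancel] at hclosed
    exact ⟨by omega, hcnC, hclosed⟩
  -- pairwise distance and nodup
  have hpw : (keptList N m δ).Pairwise
      (fun p q => (2*(N:ℤ)) < |q.1 - p.1| + |q.2 - p.2|) := by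
    have : keptList N m δ = sepAux (2*(N:ℤ)) (wlist m δ).length (wlist m δ) := by
      rw [keptList]
    rw [this]
    exact pairwise_sepAux
  have hnd : (keptList N m δ).Nodup := by
    refine List.Pairwise.imp ?_ hpw
    intro a b h hab
    subst hab
    simp at h
    omega
  have hinjOn : ∀ x ∈ keptList N m δ, ∀ y ∈ keptList N m δ, toSite x = toSite y → x = y := by
    intro x hx y hy hxy
    have hx1 := (hkey x hx).1
    have hy1 := (hkey y hy).1
    rw [toSite, toSite, Prod.mk.injEq] at hxy
    obtain ⟨ha, hb⟩ := hxy
    have hb' : x.1 + x.2 = y.1 + y.2 := by omega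
    rw [Prod.ext_iff]
    omega
  have hndm : ((keptList N m δ).map toSite).Nodup := List.Nodup.map_on hinjOn hnd
  have hcard : (IFin N m δ).card = (keptList N m δ).length := by
    rw [IFin, List.toFinset_card_of_nodup hndm, List.length_map]
  have hmemI : ∀ p ∈ IFin N m δ, ∃ c ∈ keptList N m δ, toSite c = p := by
    intro p hp
    rw [IFin, List.mem_toFinset, List.mem_map] at hp
    exact hp
  have hsite2 : ∀ c ∈ keptList N m δ, ((toSite c).2 : ℤ) = c.1 + c.2 := by
    intro c hc
    exact Int.toNat_of_nonneg (by have := (hkey c hc).1; omega)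
  refine ⟨m, δ, ⟨h3m, by rw [hcard]; exact hchain, ?_, ?_⟩, ?_⟩
  · -- parity
    intro p hp
    obtain ⟨c, hc, rfl⟩ := hmemI p hp
    rw [hsite2 c hc]
    show Even (c.1 - c.2 + (c.1 + c.2))
    exact ⟨c.1, by ring⟩
  · -- separation
    intro p hp q hq hpq
    obtain ⟨c, hc, rfl⟩ := hmemI p hp
    obtain ⟨d, hd, rfl⟩ := hmemI q hq
    have hcd : c ≠ d := fun h => hpq (by rw [h])
    have hfar : (2*(N:ℤ)) < |c.1 - d.1| + |c.2 - d.2| := by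
      have hsymm : Symmetric (fun p q : Cell => (2*(N:ℤ)) < |q.1 - p.1| + |q.2 - p.2|) := by
        intro a b h
        show (2*(N:ℤ)) < |a.1 - b.1| + |a.2 - b.2|
        rw [abs_sub_comm a.1 b.1, abs_sub_comm a.2 b.2]
        exact h
      haveI : Std.Symm (fun p q : Cell => (2*(N:ℤ)) < |q.1 - p.1| + |q.2 - p.2|) := ⟨fun a b h => hsymm h⟩
      exact (List.Pairwise.forall hpw) hd hc hcd.symm
    rw [hsite2 c hc, hsite2 d hd]
    have h1 : (toSite c).1 = c.1 - c.2 := rfl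
    have h2 : (toSite d).1 = d.1 - d.2 := rfl
    rw [h1, h2]
    have hmax := abs_add_le_max (c.1 - d.1) (c.2 - d.2)
    have he1 : c.1 - c.2 - (d.1 - d.2) = (c.1 - d.1) - (c.2 - d.2) := by ring
    have he2 : c.1 + c.2 - (d.1 + d.2) = (c.1 - d.1) + (c.2 - d.2) := by ring
    rw [he1, he2]
    omega
  · -- closedness
    intro p hp
    obtain ⟨c, hc, rfl⟩ := hmemI p hp
    have := (hkey c hc).2.2
    exact this


end DurrettProof

open DurrettProof

/-- Durrett's bound for `2N`-dependent oriented percolation (Theorem 3.2). -/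
theorem durrett_bound_2N_dependent_percolation
    {Ω : Type*} {m0 : MeasurableSpace Ω} (P : Measure Ω) [IsProbabilityMeasure P]
    (N : ℕ) (hN : 0 < N) (θ : ℝ) (hθ : θ ∈ Set.Ioo (0 : ℝ) 1)
    (op : ℤ → ℕ → Set Ω) (hmeas : ∀ x n, MeasurableSet (op x n))
    (hdep : TwoNDependentDensity P N θ op)
    (hsmall : θ ≤ (6 : ℝ) ^ (-(4 : ℝ) * (4 * (N : ℝ) + 1) ^ 2)) :
    P {ω | {q : ℤ × ℕ | Even (q.1 + (q.2 : ℤ)) ∧ Reaches op ω 0 0 q.1 q.2}.Finite}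
        ≤ ENNReal.ofReal (55 * θ ^ ((1 : ℝ) / (4 * (N : ℝ) + 1) ^ 2)) ∧
      55 * θ ^ ((1 : ℝ) / (4 * (N : ℝ) + 1) ^ 2) ≤ 1 / 20 := by
  classical
  obtain ⟨hθ0, hθ1⟩ := hθ
  set B : ℕ := (4*N+1)^2 with hB
  have hBpos : 0 < B := by positivity
  have hBcast : (4 * (N:ℝ) + 1)^2 = (B : ℝ) := by rw [hB]; push_cast; ring
  have hBR : (0:ℝ) < (B:ℝ) := by exact_mod_cast hBpos
  set y : ℝ := θ ^ ((1 : ℝ) / (4 * (N : ℝ) + 1) ^ 2) with hy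
  set z : ℝ := θ ^ ((1:ℝ)/(4*(B:ℝ))) with hz
  have hzpos : 0 < z := Real.rpow_pos_of_pos hθ0 _
  have hypos : 0 < y := Real.rpow_pos_of_pos hθ0 _
  have hz16 : z ≤ 1/6 := by
    have hle : z ≤ ((6:ℝ) ^ (-(4:ℝ) * (4*(N:ℝ)+1)^2)) ^ ((1:ℝ)/(4*(B:ℝ))) := by
      rw [hz]
      exact Real.rpow_le_rpow hθ0.le hsmall (by positivity)
    have h6 : ((6:ℝ) ^ (-(4:ℝ) * (4*(N:ℝ)+1)^2)) ^ ((1:ℝ)/(4*(B:ℝ))) = 1/6 := by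
      have hexp : (-(4:ℝ) * (4*(N:ℝ)+1)^2) * ((1:ℝ)/(4*(B:ℝ))) = -1 := by
        rw [hBcast]; field_simp
      rw [← Real.rpow_mul (by norm_num : (0:ℝ) ≤ 6), hexp, Real.rpow_neg_one]
      norm_num
    linarith
  have hz1 : z ≤ 1 := by linarith
  have hz4 : z ^ (4:ℕ) = y := by
    rw [hz, hy, ← Real.rpow_natCast (θ ^ _) 4, ← Real.rpow_mul hθ0.le]
    congr 1
    rw [hBcast]
    field_simp
    norm_num
  have hy1296 : y ≤ 1/1296 := by
    rw [← hz4]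
    calc z^(4:ℕ) ≤ (1/6 : ℝ)^(4:ℕ) := pow_le_pow_left₀ hzpos.le hz16 4
      _ = 1/1296 := by norm_num
  have hzpowB : z ^ (4*B) = θ := by
    rw [hz, ← Real.rpow_natCast (θ ^ _) (4*B), ← Real.rpow_mul hθ0.le]
    rw [show ((1:ℝ)/(4*(B:ℝ))) * ((4*B : ℕ):ℝ) = 1 by push_cast; field_simp]
    exact Real.rpow_one θ
  have hθy : θ ≤ y := by
    have h := Real.rpow_le_rpow_of_exponent_ge hθ0 hθ1.le
      (by rw [hBcast]; rw [div_le_one hBR]; exact_mod_cast hBpos : (1:ℝ)/(4*(N:ℝ)+1)^2 ≤ 1)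
    rw [Real.rpow_one] at h
    exact h
  -- events
  set EE : (Σ m : ℕ, (Fin m → Fin 3)) → Set Ω := fun d =>
    if GoodD N d.1 d.2 then ⋂ p ∈ IFin N d.1 d.2, (op p.1 p.2)ᶜ else ∅ with hEE
  have hcover : {ω | {q : ℤ × ℕ | Even (q.1 + (q.2 : ℤ)) ∧ Reaches op ω 0 0 q.1 q.2}.Finite}
      ⊆ (op 0 0)ᶜ ∪ ⋃ d, EE d := by
    intro ω hω
    by_cases hop : ω ∈ op 0 0
    · right
      obtain ⟨m, δ, hgood, hclosed⟩ := cover_lemma hN hω hop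
      refine Set.mem_iUnion.mpr ⟨⟨m, δ⟩, ?_⟩
      rw [hEE]
      simp only [if_pos hgood]
      simp only [Set.mem_iInter]
      intro p hp
      exact hclosed p hp
    · left; exact hop
  have hPE0 : P ((op 0 0)ᶜ) ≤ ENNReal.ofReal θ := by
    have h := hdep {((0:ℤ), (0:ℕ))} (by intro p hp; simp at hp; subst hp; simp)
      (by intro p hp q hq hpq; simp at hp hq; subst hp; subst hq; exact absurd rfl hpq)
    simpa using h
  set bb : ℕ → ℝ := fun m => if 3 ≤ m then (3:ℝ)^m * z^(m+1) else 0 with hbb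
  have hPEE : ∀ (m : ℕ) (δ : Fin m → Fin 3), P (EE ⟨m, δ⟩)
      ≤ ENNReal.ofReal (if 3 ≤ m then z^(m+1) else 0) := by
    intro m δ
    by_cases hg : GoodD N m δ
    · have hEEd : EE ⟨m, δ⟩ = ⋂ p ∈ IFin N m δ, (op p.1 p.2)ᶜ := by rw [hEE]; simp [hg]
      obtain ⟨h3m, hcard, hpar, hsep⟩ := hg
      have h := hdep (IFin N m δ) hpar hsep
      rw [hEEd]
      refine le_trans h (ENNReal.ofReal_le_ofReal ?_)
      rw [if_pos h3m]
      have hθc : θ ^ (IFin N m δ).card = z ^ (4*B*(IFin N m δ).card) := by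
        rw [← hzpowB, ← pow_mul]
      rw [hθc]
      apply pow_le_pow_of_le_one hzpos.le hz1
      calc m + 1 ≤ 4 * ((4*N+1)^2) * (IFin N m δ).card := hcard
        _ = 4*B*(IFin N m δ).card := by rw [hB]
    · have : EE ⟨m, δ⟩ = ∅ := by rw [hEE]; simp [hg]
      rw [this]
      simp
  have hr2 : 3 * z ≤ 1/2 := by linarith
  have hr0 : (0:ℝ) ≤ 3 * z := by linarith
  have hr1 : 3 * z < 1 := by linarith
  have hgeom : Summable (fun m : ℕ => z * (3*z)^m) :=
    (summable_geometric_of_lt_one hr0 hr1).mul_left z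
  have hbb_le : ∀ m, bb m ≤ z * (3*z)^m := by
    intro m
    simp only [hbb]
    by_cases h3 : 3 ≤ m
    · rw [if_pos h3, mul_pow, pow_succ]
      ring_nf
      exact le_refl _
    · rw [if_neg h3]
      positivity
  have hbb_nonneg : ∀ m, 0 ≤ bb m := by
    intro m
    simp only [hbb]
    by_cases h3 : 3 ≤ m
    · rw [if_pos h3]; positivity
    · rw [if_neg h3]
  have hbb_sum : Summable bb := Summable.of_nonneg_of_le hbb_nonneg hbb_le hgeom
  have htsum_bb : ∑' m, bb m ≤ 54 * y := by
    have hsplit : ∑' m, bb m = ∑ i ∈ Finset.range 3, bb i + ∑' k, bb (k + 3) :=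
      (hbb_sum.sum_add_tsum_nat_add 3).symm
    have hzero : ∑ i ∈ Finset.range 3, bb i = 0 := by
      rw [Finset.sum_range_succ, Finset.sum_range_succ, Finset.sum_range_one]
      simp only [hbb]
      norm_num
    have hterm : ∀ k : ℕ, bb (k + 3) = (27 * z^4) * (3*z)^k := by
      intro k
      simp only [hbb]
      simp only [show 3 ≤ k + 3 by omega, if_pos]
      rw [mul_pow]
      ring
    have htail : ∑' k, bb (k+3) = (27 * z^4) * (1 - 3*z)⁻¹ := by
      rw [tsum_congr hterm, tsum_mul_left, tsum_geometric_of_lt_one hr0 hr1]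
    rw [hsplit, hzero, zero_add, htail]
    have hinv : (1 - 3*z)⁻¹ ≤ 2 := by
      have h1 : (1/2 : ℝ) ≤ 1 - 3*z := by linarith
      have h2 : (0:ℝ) < 1/2 := by norm_num
      calc (1 - 3*z)⁻¹ ≤ (1/2 : ℝ)⁻¹ := inv_anti₀ h2 h1
        _ = 2 := by norm_num
    calc (27 * z^4) * (1 - 3*z)⁻¹ ≤ (27 * z^4) * 2 := by
          apply mul_le_mul_of_nonneg_left hinv (by positivity)
      _ = 54 * z^4 := by ring
      _ = 54 * y := by rw [hz4]
  have hUnion : P (⋃ d, EE d) ≤ ENNReal.ofReal (54 * y) := by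
    calc P (⋃ d, EE d) ≤ ∑' d, P (EE d) := measure_iUnion_le _
      _ ≤ ∑' d : (Σ m : ℕ, (Fin m → Fin 3)), ENNReal.ofReal (if 3 ≤ d.1 then z^(d.1+1) else 0) :=
          ENNReal.tsum_le_tsum (fun d => by obtain ⟨m, δ⟩ := d; exact hPEE m δ)
      _ = ∑' m : ℕ, ∑' _δ : (Fin m → Fin 3), ENNReal.ofReal (if 3 ≤ m then z^(m+1) else 0) :=
          ENNReal.tsum_sigma' _
      _ = ∑' m : ℕ, ENNReal.ofReal (bb m) := by
          apply tsum_congr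
          intro m
          rw [tsum_fintype]
          rw [Finset.sum_const, Finset.card_univ]
          have hcardf : Fintype.card (Fin m → Fin 3) = 3^m := by
            rw [Fintype.card_fun]
            simp
          rw [hcardf, nsmul_eq_mul]
          simp only [hbb]
          by_cases h3 : 3 ≤ m
          · simp only [if_pos h3]
            rw [show ((3^m : ℕ) : ℝ≥0∞) = ENNReal.ofReal ((3:ℝ)^m) by
              rw [ENNReal.ofReal_pow (by norm_num)]; push_cast; norm_num]
            rw [← ENNReal.ofReal_mul (by positivity)]
          · simp only [if_neg h3]
            simp
      _ = ENNReal.ofReal (∑' m, bb m) := (ENNReal.ofReal_tsum_of_nonneg hbb_nonneg hbb_sum).symm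
      _ ≤ ENNReal.ofReal (54 * y) := ENNReal.ofReal_le_ofReal htsum_bb
  constructor
  · calc P {ω | {q : ℤ × ℕ | Even (q.1 + (q.2 : ℤ)) ∧ Reaches op ω 0 0 q.1 q.2}.Finite}
        ≤ P ((op 0 0)ᶜ ∪ ⋃ d, EE d) := measure_mono hcover
      _ ≤ P ((op 0 0)ᶜ) + P (⋃ d, EE d) := measure_union_le _ _
      _ ≤ ENNReal.ofReal θ + ENNReal.ofReal (54 * y) := add_le_add hPE0 hUnion
      _ = ENNReal.ofReal (θ + 54 * y) := (ENNReal.ofReal_add hθ0.le (by positivity)).symm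
      _ ≤ ENNReal.ofReal (55 * y) := ENNReal.ofReal_le_ofReal (by linarith)
  · linarith
end

section
/- Asymptotic density for 2N-dependent oriented percolation started from the full configuration (Theorem 3.6): Let N ∈ ℕ and θ ∈ (0, 1), and let (ω(x, n))_{(x,n)∈𝓛} be a family of {0,1}-valued random variables that is 2N-dependent with density at least 1 − θ. For n ≥ 0 define W_n = {y ∈ ℤ : (y, n) ∈ 𝓛 and (x, 0) → (y, n) for some even integer x} (the oriented percolation process started from the trivial initial state W₀ = 2ℤ). If θ ≤ 6^{−4(4N+1)²}, then liminf_{n→∞} P[0 ∈ W_{2n}] ≥ 19/20. -/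
open MeasureTheory Filter
open scoped ENNReal

namespace OPdet

abbrev Site := ℤ × ℤ
abbrev Dart := Site × Site

def rot (d : Site) : Site := (-d.2, d.1)

def IsDir (d : Site) : Prop := d = (1,0) ∨ d = (-1,0) ∨ d = (0,1) ∨ d = (0,-1)

lemma rot_rot (d : Site) : rot (rot d) = -d := by
  simp [rot, Prod.ext_iff]

lemma rot_isDir {d : Site} (h : IsDir d) : IsDir (rot d) := by
  rcases h with h | h | h | h <;> subst h <;> simp [rot, IsDir]

lemma neg_isDir {d : Site} (h : IsDir d) : IsDir (-d) := by
  rcases h with h | h | h | h <;> subst h <;> simp [IsDir] <;> right <;> simp [Prod.ext_iff]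

inductive Wet (Op : Site → Prop) : Site → Prop
  | base (s : Site) (h0 : s.1 + s.2 = 0) (ho : Op s) : Wet Op s
  | up1 (s : Site) (h : Wet Op s) (ho : Op (s.1 + 1, s.2)) : Wet Op (s.1 + 1, s.2)
  | up2 (s : Site) (h : Wet Op s) (ho : Op (s.1, s.2 + 1)) : Wet Op (s.1, s.2 + 1)

inductive Dstar (Op : Site → Prop) (apex : Site) : Site → Prop
  | base : Dstar Op apex apex
  | dn1 (s : Site) (h : Dstar Op apex s) (ho : Op s) : Dstar Op apex (s.1 - 1, s.2)
  | dn2 (s : Site) (h : Dstar Op apex s) (ho : Op s) : Dstar Op apex (s.1, s.2 - 1)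

section Det

variable (Op : Site → Prop) (apex : Site)

def IsDart (x : Dart) : Prop :=
  Dstar Op apex x.1 ∧ ¬ Dstar Op apex (x.1 + x.2) ∧ IsDir x.2

def step (x : Dart) : Fin 3 → Dart
  | 0 => (x.1, rot x.2)
  | 1 => (x.1 + rot x.2, x.2)
  | 2 => (x.1 + rot x.2 + x.2, -(rot x.2))

open Classical in
noncomputable def turn (x : Dart) : Fin 3 :=
  if Dstar Op apex (x.1 + rot x.2) then
    (if Dstar Op apex (x.1 + rot x.2 + x.2) then 2 else 1)
  else 0

noncomputable def fnext (x : Dart) : Dart := step x (turn Op apex x)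

open Classical in
noncomputable def gprev (x : Dart) : Dart :=
  if Dstar Op apex (x.1 + -(rot x.2)) then
    (if Dstar Op apex (x.1 + -(rot x.2) + x.2) then (x.1 + -(rot x.2) + x.2, rot x.2)
     else (x.1 + -(rot x.2), x.2))
  else (x.1, -(rot x.2))

variable {Op apex}

lemma fnext0 {x : Dart} (h1 : ¬ Dstar Op apex (x.1 + rot x.2)) :
    fnext Op apex x = (x.1, rot x.2) := by
  rw [fnext, turn, if_neg h1]; rfl

lemma fnext1 {x : Dart} (h1 : Dstar Op apex (x.1 + rot x.2))
    (h2 : ¬ Dstar Op apex (x.1 + rot x.2 + x.2)) :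
    fnext Op apex x = (x.1 + rot x.2, x.2) := by
  rw [fnext, turn, if_pos h1, if_neg h2]; rfl

lemma fnext2 {x : Dart} (h1 : Dstar Op apex (x.1 + rot x.2))
    (h2 : Dstar Op apex (x.1 + rot x.2 + x.2)) :
    fnext Op apex x = (x.1 + rot x.2 + x.2, -(rot x.2)) := by
  rw [fnext, turn, if_pos h1, if_pos h2]; rfl

lemma step_turn (x : Dart) : step x (turn Op apex x) = fnext Op apex x := rfl

lemma fnext_isDart {x : Dart} (hx : IsDart Op apex x) : IsDart Op apex (fnext Op apex x) := by
  obtain ⟨hD, hnD, hdir⟩ := hx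
  by_cases h1 : Dstar Op apex (x.1 + rot x.2)
  · by_cases h2 : Dstar Op apex (x.1 + rot x.2 + x.2)
    · rw [fnext2 h1 h2]
      refine ⟨h2, ?_, neg_isDir (rot_isDir hdir)⟩
      have : x.1 + rot x.2 + x.2 + -(rot x.2) = x.1 + x.2 := by ring
      rw [this]; exact hnD
    · rw [fnext1 h1 h2]; exact ⟨h1, h2, hdir⟩
  · rw [fnext0 h1]; exact ⟨hD, h1, rot_isDir hdir⟩


lemma rot_neg (d : Site) : rot (-d) = -(rot d) := by simp [rot, Prod.ext_iff]

lemma gprev_fnext {x : Dart} (hx : IsDart Op apex x) : gprev Op apex (fnext Op apex x) = x := by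
  obtain ⟨hD, hnD, hdir⟩ := hx
  by_cases h1 : Dstar Op apex (x.1 + rot x.2)
  · by_cases h2 : Dstar Op apex (x.1 + rot x.2 + x.2)
    · rw [fnext2 h1 h2, gprev]
      have e0 : rot (x.1 + rot x.2 + x.2, -(rot x.2)).2 = x.2 := by
        show rot (-(rot x.2)) = x.2
        rw [rot_neg, rot_rot]; ring
      have e1 : (x.1 + rot x.2 + x.2, -(rot x.2)).1 + -(rot (x.1 + rot x.2 + x.2, -(rot x.2)).2)
          = x.1 + rot x.2 := by rw [e0]; show x.1 + rot x.2 + x.2 + -x.2 = _; ring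
      rw [e1, if_pos h1]
      have e2 : x.1 + rot x.2 + (x.1 + rot x.2 + x.2, -(rot x.2)).2 = x.1 := by
        show x.1 + rot x.2 + -(rot x.2) = x.1; ring
      rw [e2, if_pos hD, e0]
    · rw [fnext1 h1 h2, gprev]
      have e1 : (x.1 + rot x.2, x.2).1 + -(rot (x.1 + rot x.2, x.2).2) = x.1 := by
        show x.1 + rot x.2 + -(rot x.2) = x.1; ring
      rw [e1, if_pos hD]
      have e2 : x.1 + (x.1 + rot x.2, x.2).2 = x.1 + x.2 := rfl
      rw [e2, if_neg hnD]
  · rw [fnext0 h1, gprev]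
    have e1 : (x.1, rot x.2).1 + -(rot (x.1, rot x.2).2) = x.1 + x.2 := by
      show x.1 + -(rot (rot x.2)) = x.1 + x.2
      rw [rot_rot]; ring
    rw [e1, if_neg hnD]
    show (x.1, -(rot (rot x.2))) = x
    rw [rot_rot, neg_neg]

end Det

lemma dstar_dry {Op : Site → Prop} {n : ℕ} (hdry : ¬ Wet Op ((n:ℤ), (n:ℤ)))
    {s : Site} (h : Dstar Op ((n:ℤ),(n:ℤ)) s) : ¬ Wet Op s := by
  induction h with
  | base => exact hdry
  | dn1 s hs ho ih =>
      intro hw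
      have h2 : Wet Op ((s.1 - 1) + 1, s.2) := Wet.up1 _ hw (by simpa using ho)
      apply ih; simpa using h2
  | dn2 s hs ho ih =>
      intro hw
      have h2 : Wet Op (s.1, (s.2 - 1) + 1) := Wet.up2 _ hw (by simpa using ho)
      apply ih; simpa using h2

lemma dstar_nonneg {Op : Site → Prop} {n : ℕ} (hdry : ¬ Wet Op ((n:ℤ), (n:ℤ)))
    {s : Site} (h : Dstar Op ((n:ℤ),(n:ℤ)) s) : 0 ≤ s.1 + s.2 := by
  induction h with
  | base => positivity
  | dn1 s hs ho ih =>
      have hne : s.1 + s.2 ≠ 0 := by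
        intro h0
        exact dstar_dry hdry hs (Wet.base s h0 ho)
      simp only []; omega
  | dn2 s hs ho ih =>
      have hne : s.1 + s.2 ≠ 0 := by
        intro h0
        exact dstar_dry hdry hs (Wet.base s h0 ho)
      simp only []; omega

lemma dstar_le {Op : Site → Prop} {n : ℕ}
    {s : Site} (h : Dstar Op ((n:ℤ),(n:ℤ)) s) : s.1 ≤ (n:ℤ) ∧ s.2 ≤ (n:ℤ) := by
  induction h with
  | base => exact ⟨le_refl _, le_refl _⟩
  | dn1 s hs ho ih => exact ⟨by simp; omega, by simp; omega⟩
  | dn2 s hs ho ih => exact ⟨by simp; omega, by simp; omega⟩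

lemma dstar_finite {Op : Site → Prop} {n : ℕ} (hdry : ¬ Wet Op ((n:ℤ), (n:ℤ))) :
    {s : Site | Dstar Op ((n:ℤ),(n:ℤ)) s}.Finite := by
  apply Set.Finite.subset (Set.finite_Icc ((-(n:ℤ), -(n:ℤ)) : Site) (((n:ℤ), (n:ℤ)) : Site))
  intro s hs
  have h1 := dstar_le hs
  have h2 := dstar_nonneg hdry hs
  simp only [Set.mem_Icc, Prod.le_def]
  constructor
  · constructor <;> omega
  · exact h1

lemma isDir_finite : {d : Site | IsDir d}.Finite := by
  have he : {d : Site | IsDir d} =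
      (({((1:ℤ),(0:ℤ)), ((-1:ℤ),(0:ℤ)), ((0:ℤ),(1:ℤ)), ((0:ℤ),(-1:ℤ))}) : Set Site) := by
    ext d; simp [IsDir]
  rw [he]
  exact (((Set.finite_singleton _).insert _).insert _).insert _

lemma isDart_finite {Op : Site → Prop} {n : ℕ} (hdry : ¬ Wet Op ((n:ℤ), (n:ℤ))) :
    {x : Dart | IsDart Op ((n:ℤ),(n:ℤ)) x}.Finite := by
  apply Set.Finite.subset ((dstar_finite hdry).prod isDir_finite)
  rintro ⟨s, d⟩ ⟨h1, h2, h3⟩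
  exact ⟨h1, h3⟩

def anchor (n : ℕ) : Dart := (((n : ℤ), (n : ℤ)), ((0:ℤ), (1:ℤ)))

lemma anchor_isDart {Op : Site → Prop} {n : ℕ} :
    IsDart Op ((n:ℤ),(n:ℤ)) (anchor n) := by
  refine ⟨Dstar.base, ?_, Or.inr (Or.inr (Or.inl rfl))⟩
  intro h
  have := (dstar_le h).2
  simp [anchor] at this

lemma sw_closed {Op : Site → Prop} {apex : Site} {x : Dart} (hx : IsDart Op apex x)
    (h : x.2 = ((-1:ℤ),(0:ℤ)) ∨ x.2 = ((0:ℤ),(-1:ℤ))) : ¬ Op x.1 := by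
  intro hop
  obtain ⟨hD, hnD, _⟩ := hx
  apply hnD
  rcases h with h | h <;> rw [h]
  · have : x.1 + ((-1:ℤ),(0:ℤ)) = (x.1.1 - 1, x.1.2) := by
      simp [Prod.ext_iff]; ring
    rw [this]; exact Dstar.dn1 x.1 hD hop
  · have : x.1 + ((0:ℤ),(-1:ℤ)) = (x.1.1, x.1.2 - 1) := by
      simp [Prod.ext_iff]; ring
    rw [this]; exact Dstar.dn2 x.1 hD hop

section Cycle

variable {Op : Site → Prop} {n : ℕ}

lemma iter_isDart (hdry : ¬ Wet Op ((n:ℤ), (n:ℤ))) (i : ℕ) :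
    IsDart Op ((n:ℤ),(n:ℤ)) ((fnext Op ((n:ℤ),(n:ℤ)))^[i] (anchor n)) := by
  induction i with
  | zero => exact anchor_isDart
  | succ i ih =>
      rw [Function.iterate_succ_apply']
      exact fnext_isDart ih

lemma iterate_cancel {Op : Site → Prop} {apex : Site} :
    ∀ (i : ℕ) {y z : Dart}, IsDart Op apex y → IsDart Op apex z →
      (fnext Op apex)^[i] y = (fnext Op apex)^[i] z → y = z := by
  intro i
  induction i with
  | zero => intro y z _ _ h; simpa using h
  | succ i ih =>
      intro y z hy hz h
      rw [Function.iterate_succ_apply, Function.iterate_succ_apply] at h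
      have := ih (fnext_isDart hy) (fnext_isDart hz) h
      have h2 : gprev Op apex (fnext Op apex y) = gprev Op apex (fnext Op apex z) := by rw [this]
      rwa [gprev_fnext hy, gprev_fnext hz] at h2

lemma exists_period (hdry : ¬ Wet Op ((n:ℤ), (n:ℤ))) :
    ∃ l : ℕ, 0 < l ∧ (fnext Op ((n:ℤ),(n:ℤ)))^[l] (anchor n) = anchor n := by
  haveI := (isDart_finite hdry).to_subtype
  obtain ⟨i, j, hne, heq⟩ := Finite.exists_ne_map_eq_of_infinite
    (fun i : ℕ => (⟨(fnext Op ((n:ℤ),(n:ℤ)))^[i] (anchor n), iter_isDart hdry i⟩ :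
      {x : Dart // x ∈ {x : Dart | IsDart Op ((n:ℤ),(n:ℤ)) x}}))
  have heq' : (fnext Op ((n:ℤ),(n:ℤ)))^[i] (anchor n)
      = (fnext Op ((n:ℤ),(n:ℤ)))^[j] (anchor n) := congrArg Subtype.val heq
  rcases lt_or_gt_of_ne hne with hij | hij
  · refine ⟨j - i, by omega, ?_⟩
    apply iterate_cancel i (iter_isDart hdry _) anchor_isDart
    rw [← Function.iterate_add_apply]
    have hji : i + (j - i) = j := by omega
    rw [hji, ← heq']
  · refine ⟨i - j, by omega, ?_⟩
    apply iterate_cancel j (iter_isDart hdry _) anchor_isDart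
    rw [← Function.iterate_add_apply]
    have hji : j + (i - j) = i := by omega
    rw [hji, heq']

end Cycle
def traj (a : Dart) (t : ℕ → Fin 3) : ℕ → Dart
  | 0 => a
  | (i+1) => step (traj a t i) (t i)

def tailp (x : Dart) : Site := x.1 + x.1 + x.2 - rot x.2

lemma tailp_step (x : Dart) (j : Fin 3) :
    tailp (step x j) = x.1 + x.1 + x.2 + rot x.2 := by
  fin_cases j
  · show tailp (x.1, rot x.2) = _
    simp only [tailp, rot_rot]
    ring
  · show tailp (x.1 + rot x.2, x.2) = _
    simp only [tailp]
    ring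
  · show tailp (x.1 + rot x.2 + x.2, -(rot x.2)) = _
    simp only [tailp, rot_neg, rot_rot]
    ring

def extend (l : ℕ) (t : Fin l → Fin 3) : ℕ → Fin 3 := fun i => if h : i < l then t ⟨i, h⟩ else 0

def swSet (n l : ℕ) (t : Fin l → Fin 3) : Finset ℕ :=
  (Finset.range l).filter (fun i => (traj (anchor n) (extend l t) i).2 = ((-1:ℤ),(0:ℤ)) ∨
    (traj (anchor n) (extend l t) i).2 = ((0:ℤ),(-1:ℤ)))

def Csites (n l : ℕ) (t : Fin l → Fin 3) : Finset Site :=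
  ((swSet n l t).image (fun i => (traj (anchor n) (extend l t) i).1)).filter
    (fun s => 0 ≤ s.1 + s.2)

lemma csites_nonneg {n l : ℕ} {t : Fin l → Fin 3} {s : Site} (hs : s ∈ Csites n l t) :
    0 ≤ s.1 + s.2 := (Finset.mem_filter.mp hs).2

/-- The main deterministic theorem: if the apex is dry, there is a cycle of darts
whose SW-pointing darts give many closed sites. -/
theorem main_det (Op : Site → Prop) (n : ℕ) (hdry : ¬ Wet Op ((n:ℤ), (n:ℤ))) :
    ∃ l, 1 ≤ l ∧ ∃ t : Fin l → Fin 3,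
      (∀ s ∈ Csites n l t, ¬ Op s) ∧ l ≤ 4 * (Csites n l t).card := by
  classical
  set apex : Site := ((n:ℤ), (n:ℤ)) with hapex
  set F := fnext Op apex with hF
  set a := anchor n with ha
  have hper := exists_period hdry
  set l := Nat.find hper with hl
  obtain ⟨hlpos, hcyc⟩ : 0 < l ∧ F^[l] a = a := Nat.find_spec hper
  have hmin : ∀ m, m < l → ¬ (0 < m ∧ F^[m] a = a) := fun m hm => Nat.find_min hper hm
  refine ⟨l, hlpos, ?_⟩
  set t : Fin l → Fin 3 := fun i => turn Op apex (F^[i.1] a) with ht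
  -- trajectory reconstruction
  have htraj : ∀ i, i ≤ l → traj a (extend l t) i = F^[i] a := by
    intro i
    induction i with
    | zero => intro _; rfl
    | succ i ih =>
        intro hi
        have hi' : i < l := by omega
        show step (traj a (extend l t) i) (extend l t i) = _
        rw [ih (by omega)]
        have he : extend l t i = turn Op apex (F^[i] a) := by
          simp [extend, hi', ht]
        rw [he, step_turn]
        exact (Function.iterate_succ_apply' F i a).symm
  -- injectivity on the cycle
  have hinj : ∀ i, i < l → ∀ j, j < l → F^[i] a = F^[j] a → i = j := by
    intro i hi j hj heq
    by_contra hne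
    rcases lt_or_gt_of_ne hne with hij | hij
    · apply hmin (j - i) (by omega)
      refine ⟨by omega, ?_⟩
      apply iterate_cancel i (iter_isDart hdry _) anchor_isDart
      rw [← Function.iterate_add_apply]
      have : i + (j - i) = j := by omega
      rw [this, heq]
    · apply hmin (i - j) (by omega)
      refine ⟨by omega, ?_⟩
      apply iterate_cancel j (iter_isDart hdry _) anchor_isDart
      rw [← Function.iterate_add_apply]
      have : j + (i - j) = i := by omega
      rw [this, ← heq]
  -- swSet in terms of F
  have hsw : swSet n l t = (Finset.range l).filter (fun i => (F^[i] a).2 = ((-1:ℤ),(0:ℤ)) ∨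
      (F^[i] a).2 = ((0:ℤ),(-1:ℤ))) := by
    apply Finset.filter_congr
    intro i hi
    rw [htraj i (le_of_lt (Finset.mem_range.mp hi))]
  refine ⟨t, ?_, ?_⟩
  -- closedness
  · intro s hs
    obtain ⟨i, hi, hsite⟩ := Finset.mem_image.mp (Finset.mem_filter.mp hs).1
    rw [hsw] at hi
    obtain ⟨hirange, hdir⟩ := Finset.mem_filter.mp hi
    have hd : IsDart Op apex (F^[i] a) := iter_isDart hdry i
    have hsite' : (F^[i] a).1 = s := by
      rw [← htraj i (le_of_lt (Finset.mem_range.mp hirange))]; exact hsite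
    rw [← hsite']
    exact sw_closed hd hdir
  -- cardinality
  · -- balance
    have htel : ∀ i, tailp (traj a (extend l t) (i+1)) - tailp (traj a (extend l t) i)
        = rot ((traj a (extend l t) i).2) + rot ((traj a (extend l t) i).2) := by
      intro i
      show tailp (step _ _) - _ = _
      rw [tailp_step]
      simp only [tailp]
      ring
    have hsum0 : (∑ i ∈ Finset.range l,
        (rot ((traj a (extend l t) i).2) + rot ((traj a (extend l t) i).2))) = 0 := by
      have := Finset.sum_range_sub (fun i => tailp (traj a (extend l t) i)) l
      rw [htraj l (le_refl l), hcyc] at this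
      calc (∑ i ∈ Finset.range l,
            (rot ((traj a (extend l t) i).2) + rot ((traj a (extend l t) i).2)))
          = ∑ i ∈ Finset.range l, (tailp (traj a (extend l t) (i+1)) - tailp (traj a (extend l t) i)) := by
            apply Finset.sum_congr rfl
            intro i _
            rw [htel]
        _ = tailp a - tailp (traj a (extend l t) 0) := by rw [this]
        _ = 0 := by show tailp a - tailp a = 0; ring
    have hsumrot : (∑ i ∈ Finset.range l, rot ((F^[i] a).2)) = 0 := by
      have h2 : (∑ i ∈ Finset.range l, rot ((traj a (extend l t) i).2)) = 0 := by
        rw [Finset.sum_add_distrib] at hsum0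
        set S : Site := (∑ i ∈ Finset.range l, rot ((traj a (extend l t) i).2)) with hS
        have c1 : S.1 + S.1 = 0 := by
          have := congrArg Prod.fst hsum0
          simpa using this
        have c2 : S.2 + S.2 = 0 := by
          have := congrArg Prod.snd hsum0
          simpa using this
        have : S = (0, 0) := by
          rw [Prod.ext_iff]
          constructor <;> [skip; skip] <;> simp <;> omega
        exact this
      rw [← h2]
      apply Finset.sum_congr rfl
      intro i hi
      rw [htraj i (le_of_lt (Finset.mem_range.mp hi))]
    -- coordinates
    have hsum1 : (∑ i ∈ Finset.range l, ((F^[i] a).2).1) = 0 := by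
      have := congrArg Prod.snd hsumrot
      simpa [rot, Prod.snd_sum] using this
    have hsum2 : (∑ i ∈ Finset.range l, ((F^[i] a).2).2) = 0 := by
      have := congrArg Prod.fst hsumrot
      have h2 : (∑ i ∈ Finset.range l, -(((F^[i] a).2).2)) = 0 := by
        simpa [rot, Prod.fst_sum] using this
      have h3 : -(∑ i ∈ Finset.range l, ((F^[i] a).2).2) = 0 := by
        rw [← Finset.sum_neg_distrib]; exact h2
      exact neg_eq_zero.mp h3
    -- direction counts
    set dd : ℕ → Site := fun i => (F^[i] a).2 with hdd
    have hdir : ∀ i ∈ Finset.range l, IsDir (dd i) := fun i _ => (iter_isDart hdry i).2.2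
    set s1 := (Finset.range l).filter (fun i => dd i = ((1:ℤ),(0:ℤ))) with hs1
    set s2 := (Finset.range l).filter (fun i => dd i = ((-1:ℤ),(0:ℤ))) with hs2
    set s3 := (Finset.range l).filter (fun i => dd i = ((0:ℤ),(1:ℤ))) with hs3
    set s4 := (Finset.range l).filter (fun i => dd i = ((0:ℤ),(-1:ℤ))) with hs4
    have e1 : (∑ i ∈ Finset.range l, (dd i).1) = (s1.card : ℤ) - (s2.card : ℤ) := by
      have hpt : ∀ i ∈ Finset.range l, (dd i).1 =
          ((if dd i = ((1:ℤ),(0:ℤ)) then (1:ℤ) else 0) -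
           (if dd i = ((-1:ℤ),(0:ℤ)) then (1:ℤ) else 0)) := by
        intro i hi
        rcases hdir i hi with h|h|h|h <;> rw [h] <;> norm_num [Prod.ext_iff]
      rw [Finset.sum_congr rfl hpt, Finset.sum_sub_distrib, Finset.sum_boole, Finset.sum_boole]
    have e2 : (∑ i ∈ Finset.range l, (dd i).2) = (s3.card : ℤ) - (s4.card : ℤ) := by
      have hpt : ∀ i ∈ Finset.range l, (dd i).2 =
          ((if dd i = ((0:ℤ),(1:ℤ)) then (1:ℤ) else 0) -
           (if dd i = ((0:ℤ),(-1:ℤ)) then (1:ℤ) else 0)) := by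
        intro i hi
        rcases hdir i hi with h|h|h|h <;> rw [h] <;> norm_num [Prod.ext_iff]
      rw [Finset.sum_congr rfl hpt, Finset.sum_sub_distrib, Finset.sum_boole, Finset.sum_boole]
    have etot : (l : ℤ) = (s1.card : ℤ) + s2.card + s3.card + s4.card := by
      have hpt : ∀ i ∈ Finset.range l, (1:ℤ) =
          ((if dd i = ((1:ℤ),(0:ℤ)) then (1:ℤ) else 0) +
           (if dd i = ((-1:ℤ),(0:ℤ)) then (1:ℤ) else 0) +
           (if dd i = ((0:ℤ),(1:ℤ)) then (1:ℤ) else 0) +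
           (if dd i = ((0:ℤ),(-1:ℤ)) then (1:ℤ) else 0)) := by
        intro i hi
        rcases hdir i hi with h|h|h|h <;> rw [h] <;> norm_num [Prod.ext_iff]
      have : (∑ i ∈ Finset.range l, (1:ℤ)) = (s1.card : ℤ) + s2.card + s3.card + s4.card := by
        rw [Finset.sum_congr rfl hpt]
        rw [Finset.sum_add_distrib, Finset.sum_add_distrib, Finset.sum_add_distrib,
          Finset.sum_boole, Finset.sum_boole, Finset.sum_boole, Finset.sum_boole]
      simpa using this
    have hswcard : 2 * (swSet n l t).card = l := by
      have hsw2 : swSet n l t = s2 ∪ s4 := by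
        rw [hsw, hs2, hs4, ← Finset.filter_or]
      have hdisj : Disjoint s2 s4 := by
        rw [Finset.disjoint_left]
        intro i hi2 hi4
        have h2 := (Finset.mem_filter.mp hi2).2
        have h4 := (Finset.mem_filter.mp hi4).2
        rw [h2] at h4
        exact absurd (congrArg Prod.fst h4) (by norm_num)
      have hcard : (swSet n l t).card = s2.card + s4.card := by
        rw [hsw2, Finset.card_union_of_disjoint hdisj]
      rw [hsum1] at e1
      rw [hsum2] at e2
      omega
    -- image multiplicity
    set img := (swSet n l t).image (fun i => (traj a (extend l t) i).1) with himg
    have hmul : (swSet n l t).card ≤ 2 * img.card := by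
      apply Finset.card_le_mul_card_image
      intro b hb
      have hcard2 : (({(b, ((-1:ℤ),(0:ℤ))), (b, ((0:ℤ),(-1:ℤ)))} : Finset Dart)).card ≤ 2 := by
        apply le_trans (Finset.card_insert_le _ _)
        simp
      refine le_trans (Finset.card_le_card_of_injOn (fun i => traj a (extend l t) i) ?_ ?_) hcard2
      · intro i hi
        show traj a (extend l t) i ∈ ({(b, ((-1:ℤ),(0:ℤ))), (b, ((0:ℤ),(-1:ℤ)))} : Finset Dart)
        obtain ⟨hisw, hib⟩ := Finset.mem_filter.mp hi
        have hirange : i < l := by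
          have := Finset.mem_filter.mp ((hsw ▸ hisw : i ∈ _))
          exact Finset.mem_range.mp this.1
        have htr := htraj i (le_of_lt hirange)
        have hd2 : (traj a (extend l t) i).2 = ((-1:ℤ),(0:ℤ)) ∨
            (traj a (extend l t) i).2 = ((0:ℤ),(-1:ℤ)) := by
          have := Finset.mem_filter.mp hisw
          exact this.2
        have heta : traj a (extend l t) i = ((traj a (extend l t) i).1, (traj a (extend l t) i).2) := rfl
        rcases hd2 with h | h
        · rw [Finset.mem_insert]; left; rw [heta, hib, h]
        · rw [Finset.mem_insert]; right; rw [Finset.mem_singleton, heta, hib, h]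
      · intro i hi j hj heq
        obtain ⟨hisw, _⟩ := Finset.mem_filter.mp hi
        obtain ⟨hjsw, _⟩ := Finset.mem_filter.mp hj
        have hirange : i < l := Finset.mem_range.mp (Finset.mem_filter.mp (hsw ▸ hisw : i ∈ _)).1
        have hjrange : j < l := Finset.mem_range.mp (Finset.mem_filter.mp (hsw ▸ hjsw : j ∈ _)).1
        apply hinj i hirange j hjrange
        rw [← htraj i (le_of_lt hirange), ← htraj j (le_of_lt hjrange)]
        exact heq
    -- Csites equals img
    have hCs : Csites n l t = img := by
      rw [Csites]
      apply Finset.filter_true_of_mem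
      intro s hs
      obtain ⟨i, hi, hsite⟩ := Finset.mem_image.mp hs
      have hirange : i < l := Finset.mem_range.mp (Finset.mem_filter.mp (hsw ▸ hi : i ∈ _)).1
      have htr := htraj i (le_of_lt hirange)
      have hdart := iter_isDart hdry i
      rw [← hsite, htr]
      exact dstar_nonneg hdry hdart.1
    rw [hCs]
    omega

def far (N : ℕ) (p q : Site) : Prop :=
  (2 * N : ℤ) < max |(p.1 - p.2) - (q.1 - q.2)| |(p.1 + p.2) - (q.1 + q.2)|

instance (N : ℕ) (p q : Site) : Decidable (far N p q) := by unfold far; infer_instance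

lemma far_symm {N : ℕ} {p q : Site} (h : far N p q) : far N q p := by
  unfold far at *
  rwa [abs_sub_comm ((p.1 - p.2)) _, abs_sub_comm (p.1 + p.2) _] at h

lemma not_far_self (N : ℕ) (p : Site) : ¬ far N p p := by
  unfold far
  simp

lemma ball_card (N : ℕ) (a : Site) (S : Finset Site) :
    (S.filter (fun p => ¬ far N a p)).card ≤ (4*N+1)^2 := by
  classical
  have hinj : ∀ p ∈ S.filter (fun p => ¬ far N a p), ∀ q ∈ S.filter (fun p => ¬ far N a p),
      ((p.1 - p.2) - (a.1 - a.2), (p.1 + p.2) - (a.1 + a.2)) =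
      ((q.1 - q.2) - (a.1 - a.2), (q.1 + q.2) - (a.1 + a.2)) → p = q := by
    intro p _ q _ h
    rw [Prod.ext_iff] at h
    obtain ⟨h1, h2⟩ := h
    simp only [] at h1 h2
    rw [Prod.ext_iff]
    constructor <;> omega
  have hmap : ∀ p ∈ S.filter (fun p => ¬ far N a p),
      ((p.1 - p.2) - (a.1 - a.2), (p.1 + p.2) - (a.1 + a.2)) ∈
        (Finset.Icc (-(2*(N:ℤ))) (2*(N:ℤ)) ×ˢ Finset.Icc (-(2*(N:ℤ))) (2*(N:ℤ))) := by
    intro p hp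
    have hnf := (Finset.mem_filter.mp hp).2
    unfold far at hnf
    push_neg at hnf
    have h1 : |(p.1 - p.2) - (a.1 - a.2)| ≤ 2*(N:ℤ) := by
      rw [abs_sub_comm]; exact le_trans (le_max_left _ _) hnf
    have h2 : |(p.1 + p.2) - (a.1 + a.2)| ≤ 2*(N:ℤ) := by
      rw [abs_sub_comm]; exact le_trans (le_max_right _ _) hnf
    rw [abs_le] at h1 h2
    rw [Finset.mem_product]
    constructor <;> rw [Finset.mem_Icc] <;> constructor <;> omega
  have := Finset.card_le_card_of_injOn _ hmap (fun p hp q hq h => hinj p hp q hq h)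
  apply le_trans this
  rw [Finset.card_product, Int.card_Icc]
  have : ((2*(N:ℤ)) + 1 - (-(2*(N:ℤ)))).toNat = 4*N+1 := by omega
  rw [this, pow_two]

lemma extract (N : ℕ) (S : Finset Site) :
    ∃ T : Finset Site, T ⊆ S ∧ (∀ p ∈ T, ∀ q ∈ T, p ≠ q → far N p q) ∧
      S.card ≤ (4*N+1)^2 * T.card := by
  classical
  induction S using Finset.strongInductionOn with
  | _ S ih =>
    rcases S.eq_empty_or_nonempty with h | ⟨a, ha⟩
    · exact ⟨∅, by simp [h]⟩
    · set B := S.filter (fun p => ¬ far N a p) with hB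
      have haB : a ∈ B := by
        rw [hB, Finset.mem_filter]
        exact ⟨ha, not_far_self N a⟩
      have hBsub : B ⊆ S := Finset.filter_subset _ _
      have hssub : S \ B ⊂ S := by
        apply Finset.sdiff_ssubset hBsub ⟨a, haB⟩
      obtain ⟨T', hT'sub, hT'far, hT'card⟩ := ih (S \ B) hssub
      have haT' : a ∉ T' := by
        intro hmem
        have := hT'sub hmem
        rw [Finset.mem_sdiff] at this
        exact this.2 haB
      refine ⟨insert a T', ?_, ?_, ?_⟩
      · intro p hp
        rcases Finset.mem_insert.mp hp with h | h
        · rw [h]; exact ha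
        · exact (Finset.mem_sdiff.mp (hT'sub h)).1
      · intro p hp q hq hne
        have hfarq : ∀ r ∈ T', far N a r := by
          intro r hr
          have hrS := Finset.mem_sdiff.mp (hT'sub hr)
          by_contra hnf
          exact hrS.2 (Finset.mem_filter.mpr ⟨hrS.1, hnf⟩)
        rcases Finset.mem_insert.mp hp with h1 | h1 <;> rcases Finset.mem_insert.mp hq with h2 | h2
        · exact absurd (h1.trans h2.symm) hne
        · rw [h1]; exact hfarq q h2
        · rw [h2]; exact far_symm (hfarq p h1)
        · exact hT'far p h1 q h2 hne
      · have hc : (S \ B).card + B.card = S.card := Finset.card_sdiff_add_card_eq_card hBsub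
        have hBc : B.card ≤ (4*N+1)^2 := ball_card N a S
        rw [Finset.card_insert_of_notMem haT']
        have : (4*N+1)^2 * (T'.card + 1) = (4*N+1)^2 * T'.card + (4*N+1)^2 := by ring
        omega

section Glue

variable {Ω : Type*} (op : ℤ → ℕ → Set Ω)

def OpSet (ω : Ω) : Site → Prop := fun s => ω ∈ op (s.1 - s.2) ((s.1 + s.2).toNat)

lemma reaches_to_wet {ω : Ω} {n : ℕ} {x : ℤ} (hx : Even x)
    (hr : Reaches op ω x 0 0 (2*n)) : Wet (OpSet op ω) ((n:ℤ), (n:ℤ)) := by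
  obtain ⟨f, hf0, hftop, hstep, hopen⟩ := hr
  have claim : ∀ k, k ≤ 2*n → ∃ u v : ℤ, u + v = (k:ℤ) ∧ u - v = f k ∧
      Wet (OpSet op ω) (u, v) := by
    intro k
    induction k with
    | zero =>
        intro _
        obtain ⟨a, hA⟩ := hx
        refine ⟨a, -a, by ring, by rw [hf0]; omega, ?_⟩
        apply Wet.base (a, -a) (by ring)
        show ω ∈ op (a - -a) ((a + -a).toNat)
        have h1 : a - -a = x := by omega
        have h2 : ((a + -a).toNat) = 0 := by
          have : a + -a = 0 := by ring
          rw [this]; rfl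
        rw [h1, h2, ← hf0]
        exact hopen 0 (le_refl _) (by omega)
    | succ k ih =>
        intro hk
        obtain ⟨u, v, huv, hfy, hw⟩ := ih (by omega)
        have hs := hstep (k+1) (by omega) hk
        have hk1 : (k+1) - 1 = k := by omega
        rw [hk1] at hs
        rcases hs with hs | hs
        · refine ⟨u + 1, v, by push_cast; omega, by omega, ?_⟩
          have := Wet.up1 (u, v) hw ?_
          · exact this
          · show ω ∈ op ((u+1) - v) (((u+1) + v).toNat)
            have h1 : (u+1) - v = f (k+1) := by omega
            have h2 : (((u+1) + v).toNat) = k + 1 := by omega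
            rw [h1, h2]
            exact hopen (k+1) (by omega) hk
        · refine ⟨u, v + 1, by push_cast; omega, by omega, ?_⟩
          have := Wet.up2 (u, v) hw ?_
          · exact this
          · show ω ∈ op (u - (v+1)) ((u + (v+1)).toNat)
            have h1 : u - (v+1) = f (k+1) := by omega
            have h2 : ((u + (v+1)).toNat) = k + 1 := by omega
            rw [h1, h2]
            exact hopen (k+1) (by omega) hk
  obtain ⟨u, v, huv, hfy, hw⟩ := claim (2*n) (le_refl _)
  rw [hftop] at hfy
  have hu : u = (n:ℤ) := by push_cast at huv; omega
  have hv : v = (n:ℤ) := by push_cast at huv; omega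
  rw [hu, hv] at hw
  exact hw

lemma wet_to_reaches {ω : Ω} {s : Site} (hw : Wet (OpSet op ω) s) :
    0 ≤ s.1 + s.2 ∧ ∃ x : ℤ, Even x ∧ Reaches op ω x 0 (s.1 - s.2) ((s.1 + s.2).toNat) := by
  induction hw with
  | base s h0 ho =>
      refine ⟨by omega, s.1 - s.2, ⟨-s.2, by omega⟩, ?_⟩
      have htn : ((s.1 + s.2).toNat) = 0 := by omega
      rw [htn]
      refine ⟨fun _ => s.1 - s.2, rfl, rfl, fun k hk1 hk2 => by omega, ?_⟩
      intro k hk1 hk2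
      have hk : k = 0 := by omega
      subst hk
      show ω ∈ op (s.1 - s.2) 0
      have := ho
      show ω ∈ op (s.1 - s.2) 0
      rw [show (0:ℕ) = ((s.1 + s.2).toNat) from htn.symm]
      exact ho
  | up1 s hwet ho ih =>
      obtain ⟨hnn, x, hev, f, hf0, hftop, hstep, hopen⟩ := ih
      set m := (s.1 + s.2).toNat with hm
      have hm1 : ((s.1 + 1 + s.2).toNat) = m + 1 := by omega
      refine ⟨by omega, x, hev, ?_⟩
      show ∃ f : ℕ → ℤ, _
      rw [hm1]
      refine ⟨fun k => if k ≤ m then f k else s.1 + 1 - s.2, ?_, ?_, ?_, ?_⟩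
      · simp only [Nat.zero_le, if_pos]
        exact hf0
      · simp only [Nat.not_le.mpr (Nat.lt_succ_self m), if_neg, Nat.lt_irrefl]
        simp
      · intro k hk1 hk2
        by_cases hkm : k ≤ m
        · have hkm1 : k - 1 ≤ m := by omega
          simp only [if_pos hkm, if_pos hkm1]
          exact hstep k hk1 hkm
        · have hk : k = m + 1 := by omega
          subst hk
          have h1 : ¬ (m + 1 ≤ m) := by omega
          have h2 : (m+1) - 1 ≤ m := by omega
          simp only [if_neg h1, if_pos h2]
          have h3 : (m+1) - 1 = m := by omega
          rw [h3, hftop]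
          left
          ring
      · intro k hk1 hk2
        by_cases hkm : k ≤ m
        · simp only [if_pos hkm]
          exact hopen k (by omega) hkm
        · have hk : k = m + 1 := by omega
          subst hk
          simp only [if_neg hkm]
          show ω ∈ op (s.1 + 1 - s.2) (m+1)
          have h2 : ((s.1 + 1) + s.2).toNat = m + 1 := hm1
          have : ω ∈ op ((s.1+1) - s.2) (((s.1+1) + s.2).toNat) := ho
          rwa [h2] at this
  | up2 s hwet ho ih =>
      obtain ⟨hnn, x, hev, f, hf0, hftop, hstep, hopen⟩ := ih
      set m := (s.1 + s.2).toNat with hm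
      have hm1 : ((s.1 + (s.2 + 1)).toNat) = m + 1 := by omega
      refine ⟨by omega, x, hev, ?_⟩
      show ∃ f : ℕ → ℤ, _
      rw [hm1]
      refine ⟨fun k => if k ≤ m then f k else s.1 - (s.2 + 1), ?_, ?_, ?_, ?_⟩
      · simp only [Nat.zero_le, if_pos]
        exact hf0
      · simp only [Nat.not_le.mpr (Nat.lt_succ_self m), if_neg, Nat.lt_irrefl]
        simp
      · intro k hk1 hk2
        by_cases hkm : k ≤ m
        · have hkm1 : k - 1 ≤ m := by omega
          simp only [if_pos hkm, if_pos hkm1]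
          exact hstep k hk1 hkm
        · have hk : k = m + 1 := by omega
          subst hk
          have h1 : ¬ (m + 1 ≤ m) := by omega
          have h2 : (m+1) - 1 ≤ m := by omega
          simp only [if_neg h1, if_pos h2]
          have h3 : (m+1) - 1 = m := by omega
          rw [h3, hftop]
          right
          ring
      · intro k hk1 hk2
        by_cases hkm : k ≤ m
        · simp only [if_pos hkm]
          exact hopen k (by omega) hkm
        · have hk : k = m + 1 := by omega
          subst hk
          simp only [if_neg hkm]
          show ω ∈ op (s.1 - (s.2+1)) (m+1)
          have : ω ∈ op (s.1 - (s.2+1)) ((s.1 + (s.2+1)).toNat) := ho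
          rwa [hm1] at this

lemma event_eq_wet (n : ℕ) :
    {ω : Ω | ∃ x : ℤ, Even x ∧ Reaches op ω x 0 0 (2 * n)} =
    {ω : Ω | Wet (OpSet op ω) ((n:ℤ), (n:ℤ))} := by
  ext ω
  simp only [Set.mem_setOf_eq]
  constructor
  · rintro ⟨x, hx, hr⟩
    exact reaches_to_wet op hx hr
  · intro hw
    obtain ⟨_, x, hev, hr⟩ := wet_to_reaches op hw
    refine ⟨x, hev, ?_⟩
    have h1 : ((n:ℤ) - (n:ℤ)) = 0 := by ring
    have h2 : (((n:ℤ) + (n:ℤ)).toNat) = 2 * n := by omega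
    rwa [h1, h2] at hr

end Glue

section Meas

variable {Ω : Type*} {m0 : MeasurableSpace Ω} (op : ℤ → ℕ → Set Ω)

lemma event_measurable (hmeas : ∀ x k, MeasurableSet (op x k)) (n : ℕ) :
    MeasurableSet {ω : Ω | ∃ x : ℤ, Even x ∧ Reaches op ω x 0 0 (2 * n)} := by
  classical
  have hset : {ω : Ω | ∃ x : ℤ, Even x ∧ Reaches op ω x 0 0 (2 * n)} =
      ⋃ (g : Fin (2*n+1) → ℤ),
        (if (Even (g ⟨0, by omega⟩) ∧ g ⟨2*n, by omega⟩ = 0 ∧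
            ∀ k : ℕ, (hk1 : 0 < k) → (hk2 : k ≤ 2*n) →
              g ⟨k, by omega⟩ - g ⟨k-1, by omega⟩ = 1 ∨
              g ⟨k, by omega⟩ - g ⟨k-1, by omega⟩ = -1)
         then ⋂ (k : Fin (2*n+1)), op (g k) k.val else ∅) := by
    ext ω
    simp only [Set.mem_setOf_eq, Set.mem_iUnion]
    constructor
    · rintro ⟨x, hx, f, hf0, hftop, hstep, hopen⟩
      refine ⟨fun k => f k.val, ?_⟩
      rw [if_pos]
      · exact Set.mem_iInter.mpr (fun k => hopen k.val (Nat.zero_le _) (by omega))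
      · refine ⟨by simpa [hf0] using hx, by simpa using hftop, ?_⟩
        intro k hk1 hk2
        have := hstep k hk1 hk2
        simpa using this
    · rintro ⟨g, hg⟩
      by_cases hcond : (Even (g ⟨0, by omega⟩) ∧ g ⟨2*n, by omega⟩ = 0 ∧
            ∀ k : ℕ, (hk1 : 0 < k) → (hk2 : k ≤ 2*n) →
              g ⟨k, by omega⟩ - g ⟨k-1, by omega⟩ = 1 ∨
              g ⟨k, by omega⟩ - g ⟨k-1, by omega⟩ = -1)
      · rw [if_pos hcond] at hg
        obtain ⟨hev, htop, hsteps⟩ := hcond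
        refine ⟨g ⟨0, by omega⟩, hev,
          fun k => if h : k < 2*n+1 then g ⟨k, h⟩ else 0, by simp, ?_, ?_, ?_⟩
        · have h2n : 2*n < 2*n+1 := by omega
          simp only [dif_pos h2n]
          exact htop
        · intro k hk1 hk2
          have hklt : k < 2*n+1 := by omega
          have hklt1 : k - 1 < 2*n+1 := by omega
          simp only [dif_pos hklt, dif_pos hklt1]
          exact hsteps k hk1 hk2
        · intro k _ hk2
          have hklt : k < 2*n+1 := by omega
          simp only [dif_pos hklt]
          exact Set.mem_iInter.mp hg ⟨k, hklt⟩
      · rw [if_neg hcond] at hg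
        exact absurd hg (Set.notMem_empty ω)
  rw [hset]
  apply MeasurableSet.iUnion
  intro g
  split_ifs
  · exact MeasurableSet.iInter (fun k => hmeas _ _)
  · exact MeasurableSet.empty

end Meas

def toLat (p : Site) : ℤ × ℕ := (p.1 - p.2, (p.1 + p.2).toNat)

end OPdet

/-- Asymptotic density for `2N`-dependent oriented percolation started from the full
configuration `W₀ = 2ℤ` (Theorem 3.6): if `θ ≤ 6^{-4(4N+1)²}` then
`liminf_{n→∞} P[0 ∈ W_{2n}] ≥ 19/20`. -/
theorem density_2N_dependent_percolation_full_start
    {Ω : Type*} {m0 : MeasurableSpace Ω} (P : Measure Ω) [IsProbabilityMeasure P]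
    (N : ℕ) (hN : 0 < N) (θ : ℝ) (hθ : θ ∈ Set.Ioo (0 : ℝ) 1)
    (op : ℤ → ℕ → Set Ω) (hmeas : ∀ x n, MeasurableSet (op x n))
    (hdep : TwoNDependentDensity P N θ op)
    (hsmall : θ ≤ (6 : ℝ) ^ (-(4 : ℝ) * (4 * (N : ℝ) + 1) ^ 2)) :
    (19 / 20 : ℝ≥0∞) ≤
      Filter.liminf
        (fun n : ℕ => P {ω | ∃ x : ℤ, Even x ∧ Reaches op ω x 0 0 (2 * n)})
        Filter.atTop := by
  classical
  obtain ⟨hθ0, hθ1⟩ := hθ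
  set K := (4*N+1)^2 with hK
  have hKpos : 0 < 4*K := by positivity
  have hK25 : 25 ≤ K := by
    have h5 : 5 ≤ 4*N+1 := by omega
    calc 25 = 5^2 := by norm_num
      _ ≤ (4*N+1)^2 := Nat.pow_le_pow_left h5 2
  have hθ6 : θ ≤ ((6:ℝ)^(4*K))⁻¹ := by
    have h1 : (-(4:ℝ) * (4*(N:ℝ)+1)^2) = -(((4*K:ℕ)):ℝ) := by
      rw [hK]; push_cast; ring
    have heq : (6:ℝ) ^ (-(4:ℝ) * (4 * (N:ℝ) + 1)^2) = ((6:ℝ)^((4*K : ℕ)))⁻¹ := by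
      rw [h1, Real.rpow_neg (by norm_num : (0:ℝ) ≤ 6), Real.rpow_natCast]
    rw [← heq]; exact hsmall
  set c : ℝ≥0∞ := ENNReal.ofReal θ with hc
  have hc1 : c ≤ 1 := ENNReal.ofReal_le_one.mpr (le_of_lt hθ1)
  set q : ℝ≥0∞ := 3^(4*K) * c with hq
  have hcle : c ≤ ((6:ℝ≥0∞)^(4*K))⁻¹ := by
    rw [hc]
    calc ENNReal.ofReal θ ≤ ENNReal.ofReal (((6:ℝ)^(4*K))⁻¹) := ENNReal.ofReal_le_ofReal hθ6
      _ = ((6:ℝ≥0∞)^(4*K))⁻¹ := by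
          rw [ENNReal.ofReal_inv_of_pos (by positivity), ENNReal.ofReal_pow (by norm_num)]
          norm_num
  have hqle : q ≤ ((2:ℝ≥0∞)^(4*K))⁻¹ := by
    have h6 : ((6:ℝ≥0∞)^(4*K))⁻¹ = ((3:ℝ≥0∞)^(4*K))⁻¹ * ((2:ℝ≥0∞)^(4*K))⁻¹ := by
      rw [← ENNReal.mul_inv (Or.inl (by positivity)) (Or.inl (ENNReal.pow_ne_top (by norm_num)))]
      rw [← mul_pow]
      norm_num
    calc q ≤ 3^(4*K) * ((6:ℝ≥0∞)^(4*K))⁻¹ := mul_le_mul_right hcle _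
      _ = (3^(4*K) * ((3:ℝ≥0∞)^(4*K))⁻¹) * ((2:ℝ≥0∞)^(4*K))⁻¹ := by rw [h6]; ring
      _ = ((2:ℝ≥0∞)^(4*K))⁻¹ := by
          rw [ENNReal.mul_inv_cancel (by positivity) (ENNReal.pow_ne_top (by norm_num)), one_mul]
  have hq2 : q ≤ 1/2 := by
    refine le_trans hqle ?_
    rw [one_div, ENNReal.inv_le_inv]
    calc (2:ℝ≥0∞) = 2^1 := (pow_one 2).symm
      _ ≤ 2^(4*K) := by
          apply pow_le_pow_right₀ (by norm_num)
          omega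
  -- uniform bound on failure probability
  have hmain : ∀ n : ℕ, P ({ω : Ω | ∃ x : ℤ, Even x ∧ Reaches op ω x 0 0 (2 * n)}ᶜ) ≤ 1/20 := by
    intro n
    set me : ℕ → ℕ := fun l => (l + (4*K - 1)) / (4*K) with hme
    choose Tsel hT1 hT2 hT3 using fun (l : ℕ) (t : Fin l → Fin 3) =>
      OPdet.extract N (OPdet.Csites n l t)
    set A : (l : ℕ) → (Fin l → Fin 3) → Set Ω := fun l t =>
      if 1 ≤ l ∧ l ≤ 4*K*(Tsel l t).card then
        ⋂ p ∈ (Tsel l t).image OPdet.toLat, (op p.1 p.2)ᶜ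
      else ∅
      with hA
    have hincl : {ω : Ω | ∃ x : ℤ, Even x ∧ Reaches op ω x 0 0 (2 * n)}ᶜ ⊆
        ⋃ (l : ℕ), ⋃ (t : Fin l → Fin 3), A l t := by
      intro ω hω
      have hdry : ¬ OPdet.Wet (OPdet.OpSet op ω) ((n:ℤ),(n:ℤ)) := by
        intro hw
        apply hω
        rw [OPdet.event_eq_wet op n]
        exact hw
      obtain ⟨l, hl1, t, hclosed, hcount⟩ := OPdet.main_det (OPdet.OpSet op ω) n hdry
      have hgate : 1 ≤ l ∧ l ≤ 4*K*(Tsel l t).card := by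
        refine ⟨hl1, ?_⟩
        have h3 := hT3 l t
        calc l ≤ 4 * (OPdet.Csites n l t).card := hcount
          _ ≤ 4 * ((4*N+1)^2 * (Tsel l t).card) := Nat.mul_le_mul_left _ h3
          _ = 4*K*(Tsel l t).card := by rw [hK]; ring
      refine Set.mem_iUnion.mpr ⟨l, Set.mem_iUnion.mpr ⟨t, ?_⟩⟩
      simp only [hA]
      rw [if_pos hgate]
      refine Set.mem_iInter₂.mpr ?_
      intro p hp
      obtain ⟨s0, hs0T, hs0eq⟩ := Finset.mem_image.mp hp
      rw [← hs0eq]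
      exact hclosed s0 (hT1 l t hs0T)
    have hPA : ∀ (l : ℕ) (t : Fin l → Fin 3), P (A l t) ≤ c ^ (me l) := by
      intro l t
      by_cases hgate : 1 ≤ l ∧ l ≤ 4*K*(Tsel l t).card
      · have hnn : ∀ s ∈ Tsel l t, 0 ≤ s.1 + s.2 :=
          fun s hs => OPdet.csites_nonneg (hT1 l t hs)
        have hAeq : A l t = ⋂ p ∈ (Tsel l t).image OPdet.toLat, (op p.1 p.2)ᶜ := by
          simp only [hA]; rw [if_pos hgate]
        rw [hAeq]
        have hinj : Set.InjOn OPdet.toLat (Tsel l t) := by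
          intro p hp q hq he
          have h1 : p.1 - p.2 = q.1 - q.2 := congrArg Prod.fst he
          have h2 : (p.1 + p.2).toNat = (q.1 + q.2).toNat := congrArg Prod.snd he
          have hp' := hnn p hp
          have hq' := hnn q hq
          rw [Prod.ext_iff]
          constructor <;> omega
        have hcard : ((Tsel l t).image OPdet.toLat).card = (Tsel l t).card :=
          Finset.card_image_of_injOn hinj
        have hbound := hdep ((Tsel l t).image OPdet.toLat) ?_ ?_
        · rw [hcard] at hbound
          refine le_trans hbound ?_
          rw [ENNReal.ofReal_pow (le_of_lt hθ0)]
          apply pow_le_pow_of_le_one zero_le hc1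
          have hlle := hgate.2
          calc me l = (l + (4*K-1))/(4*K) := rfl
            _ ≤ (4*K*(Tsel l t).card + (4*K-1))/(4*K) := Nat.div_le_div_right (by omega)
            _ = (Tsel l t).card + (4*K-1)/(4*K) := Nat.mul_add_div hKpos _ _
            _ = (Tsel l t).card := by rw [Nat.div_eq_of_lt (by omega)]; omega
        · intro p hp
          obtain ⟨s0, hs0, rfl⟩ := Finset.mem_image.mp hp
          have h0 := OPdet.csites_nonneg (hT1 l t hs0)
          show Even ((s0.1 - s0.2) + (((s0.1+s0.2).toNat : ℕ) : ℤ))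
          exact ⟨s0.1, by omega⟩
        · intro p hp p' hp' hne
          obtain ⟨s0, hs0, rfl⟩ := Finset.mem_image.mp hp
          obtain ⟨s1, hs1, rfl⟩ := Finset.mem_image.mp hp'
          have hs01 : s0 ≠ s1 := fun h => hne (by rw [h])
          have hfar := hT2 l t s0 hs0 s1 hs1 hs01
          unfold OPdet.far at hfar
          have h0 := OPdet.csites_nonneg (hT1 l t hs0)
          have h1 := OPdet.csites_nonneg (hT1 l t hs1)
          have e1 : (OPdet.toLat s0).1 - (OPdet.toLat s1).1 = (s0.1 - s0.2) - (s1.1 - s1.2) := rfl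
          have e2 : (((OPdet.toLat s0).2 : ℕ) : ℤ) - (((OPdet.toLat s1).2 : ℕ) : ℤ)
              = (s0.1+s0.2) - (s1.1+s1.2) := by
            show (((s0.1+s0.2).toNat : ℕ) : ℤ) - (((s1.1+s1.2).toNat : ℕ) : ℤ) = _
            omega
          rw [e1, e2]
          exact hfar
      · have hAeq : A l t = ∅ := by simp only [hA]; rw [if_neg hgate]
        rw [hAeq]
        simp
    set G : ℕ → ℝ≥0∞ := fun l => if l = 0 then 0 else (3:ℝ≥0∞)^l * c^(me l) with hG
    have hinner : ∀ l : ℕ, P (⋃ t : Fin l → Fin 3, A l t) ≤ G l := by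
      intro l
      rcases Nat.eq_zero_or_pos l with hl0 | hlpos
      · subst hl0
        have hempty : (⋃ t : Fin 0 → Fin 3, A 0 t) = ∅ := by
          apply Set.iUnion_eq_empty.mpr
          intro t
          simp only [hA]
          rw [if_neg (by omega)]
        rw [hempty]
        simp [hG]
      · refine le_trans (measure_iUnion_le _) ?_
        rw [tsum_fintype]
        refine le_trans (Finset.sum_le_card_nsmul Finset.univ _ (c ^ (me l))
          (fun t _ => hPA l t)) ?_
        rw [Finset.card_univ, Fintype.card_fun, Fintype.card_fin, Fintype.card_fin]
        rw [nsmul_eq_mul]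
        simp only [hG]
        rw [if_neg (by omega)]
        rw [Nat.cast_pow]
        norm_num
    have hGle : ∀ m : ℕ, G (m+1) ≤ q ^ (m/(4*K) + 1) := by
      intro m
      simp only [hG]
      rw [if_neg (by omega)]
      have hmee : me (m+1) = m/(4*K) + 1 := by
        have h1 : m + 1 + (4*K - 1) = m + 4*K := by omega
        show (m + 1 + (4*K - 1)) / (4*K) = m/(4*K) + 1
        rw [h1, Nat.add_div_right _ hKpos]
      rw [hmee]
      have hdm := Nat.div_add_mod m (4*K)
      have hmod := Nat.mod_lt m hKpos
      have h3 : (3:ℝ≥0∞)^(m+1) ≤ ((3:ℝ≥0∞)^(4*K))^(m/(4*K) + 1) := by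
        rw [← pow_mul]
        apply pow_le_pow_right₀ (by norm_num)
        have hexp : 4*K*(m/(4*K)+1) = 4*K*(m/(4*K)) + 4*K := by ring
        omega
      calc (3:ℝ≥0∞)^(m+1) * c^(m/(4*K)+1) ≤ ((3:ℝ≥0∞)^(4*K))^(m/(4*K) + 1) * c^(m/(4*K)+1) :=
            mul_le_mul_left h3 _
        _ = q ^ (m/(4*K)+1) := by rw [hq, mul_pow]
    have hGsum : (∑' l, G l) ≤ 1/20 := by
      haveI : NeZero (4*K) := ⟨by omega⟩
      have hsplit : (∑' l, G l) = G 0 + ∑' m, G (m+1) := tsum_eq_zero_add' ENNReal.summable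
      have hG0 : G 0 = 0 := by simp [hG]
      have step1 : (∑' m, G (m+1)) ≤ ∑' m : ℕ, q ^ (m/(4*K) + 1) :=
        Summable.tsum_le_tsum hGle ENNReal.summable ENNReal.summable
      have step2 : (∑' m : ℕ, q ^ (m/(4*K) + 1))
          = ∑' (p : ℕ × Fin (4*K)), q ^ (p.1 + 1) := by
        rw [← ((Nat.divModEquiv (4*K)).symm.tsum_eq (fun m => q ^ (m/(4*K) + 1)))]
        apply tsum_congr
        intro p
        congr 2
        have hval : ((Nat.divModEquiv (4*K)).symm p : ℕ) = p.1 * (4*K) + (p.2 : ℕ) := by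
          simp [Nat.divModEquiv]
        rw [hval, mul_comm, Nat.mul_add_div hKpos, Nat.div_eq_of_lt p.2.isLt, add_zero]
      have step3 : (∑' (p : ℕ × Fin (4*K)), q ^ (p.1 + 1))
          = (4*K : ℝ≥0∞) * (q * (1-q)⁻¹) := by
        rw [ENNReal.tsum_prod']
        calc (∑' (a : ℕ), ∑' (_ : Fin (4*K)), q ^ (a+1))
            = ∑' (a : ℕ), (4*K : ℝ≥0∞) * q^(a+1) := by
              apply tsum_congr; intro a
              rw [tsum_fintype, Finset.sum_const, Finset.card_univ, Fintype.card_fin,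
                nsmul_eq_mul]
              norm_num
          _ = (4*K : ℝ≥0∞) * ∑' (a:ℕ), q^(a+1) := ENNReal.tsum_mul_left
          _ = (4*K : ℝ≥0∞) * (q * (1-q)⁻¹) := by
              congr 1
              calc (∑' (a:ℕ), q^(a+1)) = ∑' (a:ℕ), q * q^a := by
                    apply tsum_congr; intro a; rw [pow_succ]; ring
                _ = q * ∑' (a:ℕ), q^a := ENNReal.tsum_mul_left
                _ = q * (1-q)⁻¹ := by rw [ENNReal.tsum_geometric]
      have hinv2 : (1-q)⁻¹ ≤ 2 := by
        rw [show (2:ℝ≥0∞) = (2⁻¹)⁻¹ by rw [inv_inv]]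
        rw [ENNReal.inv_le_inv]
        calc (2:ℝ≥0∞)⁻¹ = 1 - 2⁻¹ := ENNReal.one_sub_inv_two.symm
          _ ≤ 1 - q := by
              apply tsub_le_tsub_left
              rw [one_div] at hq2
              exact hq2
      have hnat : (160*K : ℕ) ≤ 2^(4*K) := by
        have hlt : K < 2^K := Nat.lt_two_pow_self
        calc 160*K ≤ 256*K := by omega
          _ ≤ 256*2^K := by
              apply Nat.mul_le_mul_left
              omega
          _ = 2^(K+8) := by rw [pow_add]; ring
          _ ≤ 2^(4*K) := Nat.pow_le_pow_right (by norm_num) (by omega)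
      have hfin : (4*K : ℝ≥0∞) * (q * 2) ≤ 1/20 := by
        have h8 : (4*K : ℝ≥0∞) * (q*2) = (8*K : ℝ≥0∞) * q := by ring
        rw [h8]
        calc (8*K : ℝ≥0∞) * q ≤ (8*K : ℝ≥0∞) * ((2:ℝ≥0∞)^(4*K))⁻¹ := mul_le_mul_right hqle _
          _ ≤ 1/20 := by
              have hcast : ((160*K : ℕ):ℝ≥0∞) ≤ ((2:ℝ≥0∞))^(4*K) := by
                have := (Nat.cast_le (α := ℝ≥0∞)).mpr hnat
                rw [Nat.cast_pow] at this
                norm_num at this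
                exact_mod_cast this
              have h20 : ((160*K : ℕ):ℝ≥0∞) = 20 * ((8*K:ℝ≥0∞)) := by
                push_cast
                ring
              rw [h20] at hcast
              -- 20 * (8K) ≤ 2^{4K}  ⟹  8K * (2^{4K})⁻¹ ≤ 1/20
              have hcast2 : (20:ℝ≥0∞) * ((8*(K:ℝ≥0∞))) ≤ ((2:ℝ≥0∞))^(4*K) := by
                have h := (Nat.cast_le (α := ℝ≥0∞)).mpr hnat
                have hh2 : ((160*K : ℕ):ℝ≥0∞) = 20 * (8*(K:ℝ≥0∞)) := by push_cast; ring
                have hh3 : ((2^(4*K) : ℕ):ℝ≥0∞) = (2:ℝ≥0∞)^(4*K) := by push_cast; ring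
                rw [hh2, hh3] at h
                exact h
              have hb0 : ((2:ℝ≥0∞)^(4*K)) ≠ 0 := by positivity
              have hbt : ((2:ℝ≥0∞)^(4*K)) ≠ ⊤ := ENNReal.pow_ne_top (by norm_num)
              calc (8*(K:ℝ≥0∞)) * ((2:ℝ≥0∞)^(4*K))⁻¹
                  ≤ (20⁻¹ * (2:ℝ≥0∞)^(4*K)) * ((2:ℝ≥0∞)^(4*K))⁻¹ := by
                    apply mul_le_mul_left
                    have hx := mul_le_mul_right hcast2 (20⁻¹ : ℝ≥0∞)
                    rwa [← mul_assoc, ENNReal.inv_mul_cancel (by norm_num) (by norm_num),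
                      one_mul] at hx
                _ = 20⁻¹ * ((2:ℝ≥0∞)^(4*K) * ((2:ℝ≥0∞)^(4*K))⁻¹) := by ring
                _ = 20⁻¹ := by rw [ENNReal.mul_inv_cancel hb0 hbt, mul_one]
                _ = 1/20 := by rw [one_div]
      calc (∑' l, G l) = G 0 + ∑' m, G (m+1) := hsplit
        _ = ∑' m, G (m+1) := by rw [hG0, zero_add]
        _ ≤ (4*K : ℝ≥0∞) * (q * (1-q)⁻¹) := by rw [← step3, ← step2]; exact step1
        _ ≤ (4*K : ℝ≥0∞) * (q * 2) := by
            apply mul_le_mul_right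
            exact mul_le_mul_right hinv2 _
        _ ≤ 1/20 := hfin
    calc P ({ω : Ω | ∃ x : ℤ, Even x ∧ Reaches op ω x 0 0 (2 * n)}ᶜ)
        ≤ P (⋃ (l : ℕ), ⋃ (t : Fin l → Fin 3), A l t) := measure_mono hincl
      _ ≤ ∑' l : ℕ, P (⋃ t : Fin l → Fin 3, A l t) := measure_iUnion_le _
      _ ≤ ∑' l : ℕ, G l := Summable.tsum_le_tsum hinner ENNReal.summable ENNReal.summable
      _ ≤ 1/20 := hGsum
  -- conclude
  have hfinal : ∀ n : ℕ, (19/20 : ℝ≥0∞) ≤ P {ω : Ω | ∃ x : ℤ, Even x ∧ Reaches op ω x 0 0 (2 * n)} := by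
    intro n
    have hm := OPdet.event_measurable op hmeas n
    have hco := prob_compl_eq_one_sub (μ := P) hm
    have h1 : (1:ℝ≥0∞) - P {ω : Ω | ∃ x : ℤ, Even x ∧ Reaches op ω x 0 0 (2 * n)} ≤ 1/20 := by
      rw [← hco]; exact hmain n
    rw [tsub_le_iff_right] at h1
    have h3 : (19/20 : ℝ≥0∞) + 1/20 = 1 := by
      rw [ENNReal.div_add_div_same, show (19:ℝ≥0∞)+1 = 20 by norm_num]
      exact ENNReal.div_self (by norm_num) (by norm_num)
    have h1' : (1:ℝ≥0∞) ≤ P {ω : Ω | ∃ x : ℤ, Even x ∧ Reaches op ω x 0 0 (2 * n)} + 1/20 := by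
      rwa [add_comm] at h1
    have h4 : (19/20:ℝ≥0∞) + 1/20 ≤ P {ω : Ω | ∃ x : ℤ, Even x ∧ Reaches op ω x 0 0 (2 * n)} + 1/20 := by
      rw [h3]
      exact h1'
    exact (ENNReal.add_le_add_iff_right (by norm_num)).mp h4
  refine Filter.le_liminf_of_le (by isBoundedDefault) ?_
  exact Filter.Eventually.of_forall hfinal
end

section
/- Comparison of a noise-driven spin system with 2N-dependent oriented percolation (Theorem 3.5, classical case): Let d, L, N be positive integers and θ ∈ (0, 1). On a probability space, let (U_i(n))_{i∈ℤ^d, n∈ℤ≥0} be i.i.d. random variables with values in a measurable space E, let (V(x, n))_{(x,n)∈𝓛} be i.i.d. uniform-[0,1] random variables, and let ξ(0) be a {0,1}^{ℤ^d}-valued random variable, these three families being mutually independent. Define recursively ξ(n+1) = F(ξ(n), (U_i(n))_{i∈ℤ^d}) for a fixed measurable map F : {0,1}^{ℤ^d} × E^{ℤ^d} → {0,1}^{ℤ^d}. For m ∈ ℤ write ξ(n) ∈ m·H if ξ_i(n) = 1 for all i ∈ (mL e₁ + [−L/2, L/2]^d) ∩ ℤ^d, where e₁ is the first standard basis vector of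 ℤ^d. Assume the comparison hypothesis: for each (m, n) ∈ 𝓛 there is a measurable set G_{m,n} ⊆ {0,1}^{ℤ^d} × E^{B_m}, where B_m := (mL e₁ + [−NL, NL]^d) ∩ ℤ^d, such that (i) for every configuration ξ ∈ m·H one has P[(ξ, (U_i(n))_{i∈B_m}) ∈ G_{m,n}] > 1 − θ, and (ii) whenever ξ ∈ m·H, (ξ, (u_i)_{i∈B_m}) ∈ G_{m,n}, and u ∈ E^{ℤ^d} agrees with (u_i) on B_m, then F(ξ, u) ∈ (m+1)·H ∩ (m−1)·H. Then there exist {0,1}-valued random variables (ω(x, n))_{(x,n)∈𝓛} on this probability space forming a 2N-dependent family with density at least 1 − θ such that, almost surely, W_n ⊆ X_n for all n ≥ 0, where X_n := {m ∈ ℤ : (m, n) ∈ 𝓛 and ξ(n) ∈ m·H}, W₀ := X₀, and W_n := {y : (x, 0) → (y, n) for some x ∈ W₀} is the oriented percolation process defined from ω. -/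
open MeasureTheory Filter
open scoped ENNReal

noncomputable section

/-- Lattice sites of `ℤ^d`, equipped with the maximum norm. -/
abbrev Site (d : ℕ) := Fin d → ℤ

/-- The box of radius `r` around the site `m L e₁` of `ℤ^d`
(`e₁` the first standard basis vector). -/
def shiftedBox (d L : ℕ) (r : ℝ) (m : ℤ) : Set (Site d) :=
  {i | ‖i - fun k : Fin d => if (k : ℕ) = 0 then m * (L : ℤ) else 0‖ ≤ r}

/-- `ξ ∈ m·H`: the configuration `ξ` is identically `1` on the box
`(m L e₁ + [-L/2, L/2]^d) ∩ ℤ^d`. -/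
def memH (d L : ℕ) (m : ℤ) (ξ : Site d → Bool) : Prop :=
  ∀ i ∈ shiftedBox d L ((L : ℝ) / 2) m, ξ i = true

/-- Index type for the three sources of randomness: the driving noises `U`, the auxiliary
uniform variables `V`, and the initial configuration `ξ₀`. -/
abbrev RandIdx (d : ℕ) := (Site d × ℕ) ⊕ ((ℤ × ℕ) ⊕ Unit)

/-- Codomains of the three families of random variables. -/
def randβ (d : ℕ) (E : Type) : RandIdx d → Type
  | .inl _ => E
  | .inr (.inl _) => ℝ
  | .inr (.inr _) => Site d → Bool

/-- The measurable-space structures on the codomains. -/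
def randσ (d : ℕ) (E : Type) [mE : MeasurableSpace E] :
    ∀ k : RandIdx d, MeasurableSpace (randβ d E k)
  | .inl _ => mE
  | .inr (.inl _) => (inferInstance : MeasurableSpace ℝ)
  | .inr (.inr _) => (inferInstance : MeasurableSpace (Site d → Bool))

/-- The combined family of random variables. -/
def randf {Ω : Type*} {d : ℕ} {E : Type} (U : Site d → ℕ → Ω → E)
    (V : ℤ → ℕ → Ω → ℝ) (ξ0 : Ω → Site d → Bool) :
    ∀ k : RandIdx d, Ω → randβ d E k
  | .inl p => U p.1 p.2
  | .inr (.inl p) => V p.1 p.2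
  | .inr (.inr _) => ξ0


open ProbabilityTheory

/-- Freezing lemma. -/
lemma slice_bound {Ω α γ : Type*} {m0 : MeasurableSpace Ω} [MeasurableSpace α]
    [MeasurableSpace γ] (P : Measure Ω) [IsProbabilityMeasure P]
    {Y : Ω → α} {Z : Ω → γ} (hY : Measurable Y) (hZ : Measurable Z)
    (hind : IndepFun Y Z P)
    {C : Set (α × γ)} (hC : MeasurableSet C)
    {B : Set α} (hB : MeasurableSet B) (hCB : ∀ p ∈ C, p.1 ∈ B)
    {t : ℝ≥0∞} (ht : ∀ a, P (Z ⁻¹' {z | (a, z) ∈ C}) ≤ t) :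
    P ((fun ω => (Y ω, Z ω)) ⁻¹' C) ≤ t * P (Y ⁻¹' B) := by
  have hmap := (indepFun_iff_map_prod_eq_prod_map_map hY.aemeasurable hZ.aemeasurable).1 hind
  have h1 : P ((fun ω => (Y ω, Z ω)) ⁻¹' C) = (P.map fun ω => (Y ω, Z ω)) C :=
    (Measure.map_apply (hY.prodMk hZ) hC).symm
  have hPZ : IsProbabilityMeasure (P.map Z) := Measure.isProbabilityMeasure_map hZ.aemeasurable
  rw [h1, hmap, Measure.prod_apply hC]
  calc ∫⁻ a, (P.map Z) (Prod.mk a ⁻¹' C) ∂(P.map Y)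
      ≤ ∫⁻ a, B.indicator (fun _ => t) a ∂(P.map Y) := by
        refine lintegral_mono fun a => ?_
        by_cases ha : a ∈ B
        · rw [Set.indicator_of_mem ha, Measure.map_apply hZ (measurable_prodMk_left hC)]
          exact ht a
        · rw [Set.indicator_of_notMem ha]
          have he : Prod.mk a ⁻¹' C = ∅ := by
            ext z
            simp only [Set.mem_preimage, Set.mem_empty_iff_false, iff_false]
            exact fun hz => ha (hCB _ hz)
          simp [he]
    _ = t * (P.map Y) B := lintegral_indicator_const hB t
    _ = t * P (Y ⁻¹' B) := by rw [Measure.map_apply hY hB]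

lemma measurable_boolIndicator {Ω : Type*} {m : MeasurableSpace Ω} {A : Set Ω}
    (hA : MeasurableSet A) : Measurable A.boolIndicator :=
  measurable_to_bool (by rw [Set.preimage_boolIndicator_true]; exact hA)

lemma measurableSet_memH (d L : ℕ) (m : ℤ) :
    MeasurableSet {ξc : Site d → Bool | memH d L m ξc} := by
  have h : {ξc : Site d → Bool | memH d L m ξc} =
      ⋂ i ∈ shiftedBox d L ((L : ℝ) / 2) m, {ξc : Site d → Bool | ξc i = true} := by
    ext ξc; simp [memH, Set.mem_iInter]
  rw [h]
  refine MeasurableSet.biInter (Set.to_countable _) fun i _ => ?_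
  have h2 : {ξc : Site d → Bool | ξc i = true} =
      (fun ξc : Site d → Bool => ξc i) ⁻¹' {true} := rfl
  rw [h2]
  exact measurable_pi_apply i (measurableSet_singleton true)

/-- The single-site estimate. -/
lemma key_step {Ω : Type*} {E : Type} [MeasurableSpace E] {m0 : MeasurableSpace Ω}
    (P : Measure Ω) [IsProbabilityMeasure P]
    (d L N : ℕ) (x : ℤ) (n : ℕ) (θ : ℝ) (hθ0 : 0 < θ) (hθ1 : θ < 1)
    (ξn : Ω → Site d → Bool) (Un : Site d → Ω → E) (Vn : Ω → ℝ)
    (hξn : Measurable ξn) (hUn : ∀ i, Measurable (Un i)) (hVn : Measurable Vn)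
    (Gxn : Set ((Site d → Bool) × (↥(shiftedBox d L ((N : ℝ) * L) x) → E)))
    (hGm : MeasurableSet Gxn)
    (hGp : ∀ ξc : Site d → Bool, memH d L x ξc →
      ENNReal.ofReal (1 - θ) <
        P {ω | (ξc, fun i : ↥(shiftedBox d L ((N : ℝ) * L) x) => Un ↑i ω) ∈ Gxn})
    (hVu : P.map Vn = volume.restrict (Set.Icc (0 : ℝ) 1))
    (A : Set Ω) (hA : MeasurableSet A)
    (hind : IndepFun (fun ω => (ξn ω, A.boolIndicator ω))
      (fun ω => ((fun i : ↥(shiftedBox d L ((N : ℝ) * L) x) => Un ↑i ω), Vn ω)) P) :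
    P (A ∩ {ω | (memH d L x (ξn ω) ∧
        (ξn ω, fun i : ↥(shiftedBox d L ((N : ℝ) * L) x) => Un ↑i ω) ∈ Gxn) ∨
      (¬ memH d L x (ξn ω) ∧ Vn ω ≤ 1 - θ)}ᶜ) ≤ ENNReal.ofReal θ * P A := by
  classical
  set Y : Ω → (Site d → Bool) × Bool := fun ω => (ξn ω, A.boolIndicator ω) with hY
  set Z : Ω → (↥(shiftedBox d L ((N : ℝ) * L) x) → E) × ℝ :=
    fun ω => ((fun i : ↥(shiftedBox d L ((N : ℝ) * L) x) => Un ↑i ω), Vn ω) with hZ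
  set C : Set (((Site d → Bool) × Bool) × ((↥(shiftedBox d L ((N : ℝ) * L) x) → E) × ℝ)) :=
    {q | q.1.2 = true ∧
      ((memH d L x q.1.1 ∧ (q.1.1, q.2.1) ∉ Gxn) ∨
        (¬ memH d L x q.1.1 ∧ 1 - θ < q.2.2))} with hC
  have hYmeas : Measurable Y := hξn.prodMk (measurable_boolIndicator hA)
  have hZmeas : Measurable Z := by
    rw [hZ]
    exact (measurable_pi_lambda
      (fun ω (i : ↥(shiftedBox d L ((N : ℝ) * L) x)) => Un ↑i ω)
      (fun i => hUn ↑i)).prodMk hVn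
  have hHq : MeasurableSet {ξc : Site d → Bool | memH d L x ξc} := measurableSet_memH d L x
  have hCmeas : MeasurableSet C := by
    have h1 : C = ((fun q : ((Site d → Bool) × Bool) ×
          ((↥(shiftedBox d L ((N : ℝ) * L) x) → E) × ℝ) => q.1.2) ⁻¹' {true}) ∩
        ((((fun q : ((Site d → Bool) × Bool) ×
          ((↥(shiftedBox d L ((N : ℝ) * L) x) → E) × ℝ) => q.1.1) ⁻¹'
            {ξc | memH d L x ξc}) ∩
          ((fun q : ((Site d → Bool) × Bool) ×
          ((↥(shiftedBox d L ((N : ℝ) * L) x) → E) × ℝ) => (q.1.1, q.2.1)) ⁻¹' Gxn)ᶜ) ∪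
         (((fun q : ((Site d → Bool) × Bool) ×
          ((↥(shiftedBox d L ((N : ℝ) * L) x) → E) × ℝ) => q.1.1) ⁻¹'
            {ξc | memH d L x ξc})ᶜ ∩
          ((fun q : ((Site d → Bool) × Bool) ×
          ((↥(shiftedBox d L ((N : ℝ) * L) x) → E) × ℝ) => q.2.2) ⁻¹' Set.Ioi (1 - θ)))) := by
      ext q
      simp only [hC, Set.mem_setOf_eq, Set.mem_inter_iff, Set.mem_union, Set.mem_preimage,
        Set.mem_compl_iff, Set.mem_singleton_iff, Set.mem_Ioi]
    rw [h1]
    exact (measurable_fst.snd (measurableSet_singleton true)).inter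
      (((measurable_fst.fst hHq).inter
        (((measurable_fst.fst.prodMk measurable_snd.fst) hGm).compl)).union
        (((measurable_fst.fst hHq).compl).inter (measurable_snd.snd measurableSet_Ioi)))
  have hslice : ∀ a : (Site d → Bool) × Bool,
      P (Z ⁻¹' {z | (a, z) ∈ C}) ≤ ENNReal.ofReal θ := by
    rintro ⟨ξc, b⟩
    by_cases hb : b = true
    · by_cases hH : memH d L x ξc
      · have hGevm : MeasurableSet
            {ω | (ξc, fun i : ↥(shiftedBox d L ((N : ℝ) * L) x) => Un ↑i ω) ∈ Gxn} := by
          have hrfl : {ω | (ξc, fun i : ↥(shiftedBox d L ((N : ℝ) * L) x) => Un ↑i ω) ∈ Gxn} =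
              (fun ω => ((ξc, fun i : ↥(shiftedBox d L ((N : ℝ) * L) x) => Un ↑i ω) :
                (Site d → Bool) × (↥(shiftedBox d L ((N : ℝ) * L) x) → E))) ⁻¹' Gxn := rfl
          rw [hrfl]
          exact (measurable_const.prodMk (measurable_pi_lambda
            (fun ω (i : ↥(shiftedBox d L ((N : ℝ) * L) x)) => Un ↑i ω)
            (fun i => hUn ↑i))) hGm
        have hset : Z ⁻¹' {z | ((ξc, b), z) ∈ C} =
            {ω | (ξc, fun i : ↥(shiftedBox d L ((N : ℝ) * L) x) => Un ↑i ω) ∈ Gxn}ᶜ := by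
          ext ω
          simp [hC, hZ, hb, hH]
        rw [hset, prob_compl_eq_one_sub hGevm]
        calc (1 : ℝ≥0∞) - P {ω | (ξc, fun i : ↥(shiftedBox d L ((N : ℝ) * L) x) =>
              Un ↑i ω) ∈ Gxn}
            ≤ 1 - ENNReal.ofReal (1 - θ) := tsub_le_tsub_left (hGp ξc hH).le 1
          _ = ENNReal.ofReal θ := by
            rw [← ENNReal.ofReal_one, ← ENNReal.ofReal_sub _ (by linarith : (0:ℝ) ≤ 1 - θ)]
            norm_num
      · have hset : Z ⁻¹' {z | ((ξc, b), z) ∈ C} = Vn ⁻¹' Set.Ioi (1 - θ) := by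
          ext ω
          simp [hC, hZ, hb, hH]
        rw [hset, ← Measure.map_apply hVn measurableSet_Ioi, hVu,
          Measure.restrict_apply measurableSet_Ioi]
        have hIoc : Set.Ioi (1 - θ) ∩ Set.Icc (0 : ℝ) 1 = Set.Ioc (1 - θ) 1 := by
          ext r
          simp only [Set.mem_inter_iff, Set.mem_Ioi, Set.mem_Icc, Set.mem_Ioc]
          constructor
          · rintro ⟨h1, _, h3⟩; exact ⟨h1, h3⟩
          · rintro ⟨h1, h2⟩; exact ⟨h1, by linarith, h2⟩
        rw [hIoc, Real.volume_Ioc]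
        apply le_of_eq; congr 1; ring
    · have hset : Z ⁻¹' {z | ((ξc, b), z) ∈ C} = ∅ := by
        ext ω
        simp [hC, hb]
      simp [hset]
  have hpre : A ∩ {ω | (memH d L x (ξn ω) ∧
        (ξn ω, fun i : ↥(shiftedBox d L ((N : ℝ) * L) x) => Un ↑i ω) ∈ Gxn) ∨
      (¬ memH d L x (ξn ω) ∧ Vn ω ≤ 1 - θ)}ᶜ = (fun ω => (Y ω, Z ω)) ⁻¹' C := by
    ext ω
    have hbi : (A.boolIndicator ω = true) ↔ ω ∈ A := (Set.mem_iff_boolIndicator A ω).symm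
    by_cases hAω : ω ∈ A <;> by_cases hH : memH d L x (ξn ω) <;>
      simp [hC, hY, hZ, hAω, hH, not_le, hbi] <;> tauto
  have hB : Y ⁻¹' {a : (Site d → Bool) × Bool | a.2 = true} = A := by
    ext ω
    simp only [hY, Set.mem_preimage, Set.mem_setOf_eq]
    exact (Set.mem_iff_boolIndicator A ω).symm
  calc P (A ∩ _) = P ((fun ω => (Y ω, Z ω)) ⁻¹' C) := by rw [hpre]
    _ ≤ ENNReal.ofReal θ * P (Y ⁻¹' {a : (Site d → Bool) × Bool | a.2 = true}) :=
        slice_bound P hYmeas hZmeas hind hCmeas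
          (measurable_snd (measurableSet_singleton true)) (fun q hq => hq.1) hslice
    _ = ENNReal.ofReal θ * P A := by rw [hB]

lemma box_disjoint (d L : ℕ) (hd : 0 < d) (hL : 0 < L) (r : ℝ) {x y : ℤ}
    (hxy : 2 * r < |(x : ℝ) - y| * L) (i : Site d)
    (hx : i ∈ shiftedBox d L r x) : i ∉ shiftedBox d L r y := by
  intro hy
  set k : Fin d := ⟨0, hd⟩
  have h1 := (norm_le_pi_norm (i - fun k : Fin d => if (k : ℕ) = 0 then x * L else 0) k).trans hx
  have h2 := (norm_le_pi_norm (i - fun k : Fin d => if (k : ℕ) = 0 then y * L else 0) k).trans hy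
  have e1 : (i - fun k : Fin d => if (k : ℕ) = 0 then x * L else 0) k = i k - x * L := by
    simp [k]
  have e2 : (i - fun k : Fin d => if (k : ℕ) = 0 then y * L else 0) k = i k - y * L := by
    simp [k]
  rw [e1, Int.norm_eq_abs] at h1
  rw [e2, Int.norm_eq_abs] at h2
  push_cast at h1 h2
  have h3 : |(x : ℝ) * L - y * L| ≤ 2 * r := by
    calc |(x : ℝ) * L - y * L| ≤ |(x : ℝ) * L - i k| + |(i k : ℝ) - y * L| := abs_sub_le _ _ _
      _ ≤ r + r := add_le_add (by rw [abs_sub_comm]; exact h1) h2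
      _ = 2 * r := by ring
  have h4 : |(x : ℝ) - y| * L = |(x : ℝ) * L - y * L| := by
    rw [show (x : ℝ) * L - y * L = ((x : ℝ) - y) * L by ring, abs_mul,
      abs_of_nonneg (by positivity : (0:ℝ) ≤ (L : ℝ))]
  rw [h4] at hxy
  linarith

/-- The open-site events. -/
def opDef {Ω : Type*} {E : Type} (d L N : ℕ) (θ : ℝ)
    (U : Site d → ℕ → Ω → E) (V : ℤ → ℕ → Ω → ℝ)
    (ξ : ℕ → Ω → Site d → Bool)
    (G : (m : ℤ) → ℕ → Set ((Site d → Bool) × (↥(shiftedBox d L ((N : ℝ) * L) m) → E)))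
    (x : ℤ) (n : ℕ) : Set Ω :=
  {ω | Even (x + (n : ℤ)) ∧
    ((memH d L x (ξ n ω) ∧
        (ξ n ω, fun i : ↥(shiftedBox d L ((N : ℝ) * L) x) => U ↑i n ω) ∈ G x n) ∨
      (¬ memH d L x (ξ n ω) ∧ V x n ω ≤ 1 - θ))}

/-- The indices of randomness used at the site `(x, n)` (besides the past). -/
def excluded (d L : ℕ) (r : ℝ) (x : ℤ) (n : ℕ) : Set (RandIdx d) :=
  {j | j = Sum.inr (Sum.inl (x, n)) ∨ ∃ i ∈ shiftedBox d L r x, j = Sum.inl (i, n)}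

/-- The σ-algebras generated by the individual sources of randomness. -/
def randm {Ω : Type*} {d : ℕ} {E : Type} [MeasurableSpace E]
    (U : Site d → ℕ → Ω → E) (V : ℤ → ℕ → Ω → ℝ) (ξ0 : Ω → Site d → Bool) :
    RandIdx d → MeasurableSpace Ω :=
  fun j => (randσ d E j).comap (randf U V ξ0 j)

/-- Theorem 3.5 (classical case): comparison of a noise-driven spin system with
`2N`-dependent oriented percolation.  Under the comparison hypothesis for the "good
events" `G`, there are open-site variables on the same probability space, forming a
`2N`-dependent family with density at least `1 - θ`, whose oriented percolation process
started from `W₀ = X₀` is dominated by the process `X_n = {m : ξ(n) ∈ m·H}`. -/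
theorem spin_system_percolation_comparison
    {Ω : Type*} {m0 : MeasurableSpace Ω} (P : Measure Ω) [IsProbabilityMeasure P]
    {E : Type} [MeasurableSpace E]
    (d L N : ℕ) (hd : 0 < d) (hL : 0 < L) (hN : 0 < N)
    (θ : ℝ) (hθ : θ ∈ Set.Ioo (0 : ℝ) 1)
    (U : Site d → ℕ → Ω → E) (V : ℤ → ℕ → Ω → ℝ) (ξ0 : Ω → Site d → Bool)
    (hUmeas : ∀ i n, Measurable (U i n)) (hVmeas : ∀ x n, Measurable (V x n))
    (hξ0meas : Measurable ξ0)
    -- `U` is i.i.d., `V` is i.i.d. uniform on `[0,1]`, and `U`, `V`, `ξ₀` are mutually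
    -- independent:
    (hUiid : ∀ i n i' n', ProbabilityTheory.IdentDistrib (U i n) (U i' n') P P)
    (hVunif : ∀ x n, P.map (V x n) = volume.restrict (Set.Icc (0 : ℝ) 1))
    (hindep : ProbabilityTheory.iIndepFun (m := randσ d E) (randf U V ξ0) P)
    -- the spin system, defined recursively from the noise by the measurable map `F`:
    (F : (Site d → Bool) → (Site d → E) → Site d → Bool)
    (hFmeas : Measurable fun q : (Site d → Bool) × (Site d → E) => F q.1 q.2)
    (ξ : ℕ → Ω → Site d → Bool)
    (hξ0 : ξ 0 = ξ0)
    (hξrec : ∀ n ω, ξ (n + 1) ω = F (ξ n ω) fun i => U i n ω)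
    -- the good events `G_{m,n}`, for `(m,n) ∈ 𝓛`, with `B_m = (mLe₁ + [-NL,NL]^d) ∩ ℤ^d`:
    (G : (m : ℤ) → ℕ → Set ((Site d → Bool) × (↥(shiftedBox d L ((N : ℝ) * L) m) → E)))
    (hGmeas : ∀ m n, MeasurableSet (G m n))
    (hGprob : ∀ (m : ℤ) (n : ℕ), Even (m + (n : ℤ)) →
      ∀ ξc : Site d → Bool, memH d L m ξc →
        ENNReal.ofReal (1 - θ) <
          P {ω | (ξc, fun i : ↥(shiftedBox d L ((N : ℝ) * L) m) => U ↑i n ω) ∈ G m n})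
    (hGgood : ∀ (m : ℤ) (n : ℕ), Even (m + (n : ℤ)) →
      ∀ (ξc : Site d → Bool) (u : Site d → E), memH d L m ξc →
        (ξc, fun i : ↥(shiftedBox d L ((N : ℝ) * L) m) => u ↑i) ∈ G m n →
        memH d L (m + 1) (F ξc u) ∧ memH d L (m - 1) (F ξc u)) :
    ∃ op : ℤ → ℕ → Set Ω,
      (∀ x n, MeasurableSet (op x n)) ∧
      TwoNDependentDensity P N θ op ∧
      ∀ᵐ ω ∂P, ∀ (n : ℕ) (y : ℤ),
        (∃ x : ℤ, (Even x ∧ memH d L x (ξ 0 ω)) ∧ Reaches op ω x 0 y n) →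
        Even (y + (n : ℤ)) ∧ memH d L y (ξ n ω) := by
  classical
  obtain ⟨hθ0, hθ1⟩ := hθ
  have hrandf_meas : ∀ j, @Measurable Ω (randβ d E j) m0 (randσ d E j) (randf U V ξ0 j) := by
    rintro (⟨i, n⟩ | ⟨x, n⟩ | u)
    · exact hUmeas i n
    · exact hVmeas x n
    · exact hξ0meas
  have h_le : ∀ j, randm U V ξ0 j ≤ m0 := fun j => (hrandf_meas j).comap_le
  have hsup_le : ∀ S : Set (RandIdx d), (⨆ k ∈ S, randm U V ξ0 k) ≤ m0 :=
    fun S => iSup₂_le fun j _ => h_le j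
  have hbasic : ∀ (S : Set (RandIdx d)) (j : RandIdx d), j ∈ S →
      @Measurable Ω (randβ d E j) (⨆ k ∈ S, randm U V ξ0 k) (randσ d E j)
        (randf U V ξ0 j) := by
    intro S j hj
    refine Measurable.of_comap_le ?_
    exact le_iSup₂ (f := fun (k : RandIdx d) (_ : k ∈ S) => randm U V ξ0 k) j hj
  have hξmeasS : ∀ S : Set (RandIdx d), Sum.inr (Sum.inr ()) ∈ S → ∀ n : ℕ,
      (∀ (i : Site d) (k : ℕ), k < n → Sum.inl (i, k) ∈ S) →
      Measurable[⨆ k ∈ S, randm U V ξ0 k] (ξ n) := by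
    intro S hS0 n
    induction n with
    | zero =>
      intro _
      rw [hξ0]
      exact hbasic S _ hS0
    | succ n ih =>
      intro hSU
      have hrw : ξ (n + 1) = fun ω => F (ξ n ω) fun i => U i n ω :=
        funext fun ω => hξrec n ω
      rw [hrw]
      have hUp : Measurable[⨆ k ∈ S, randm U V ξ0 k] (fun ω (i : Site d) => U i n ω) := by
        letI := ⨆ k ∈ S, randm U V ξ0 k
        refine measurable_pi_iff.mpr fun i => ?_
        exact hbasic S (Sum.inl (i, n)) (hSU i n n.lt_succ_self)
      exact hFmeas.comp ((ih fun i k hk => hSU i k (hk.trans n.lt_succ_self)).prodMk hUp)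
  have hξmeas : ∀ n, Measurable (ξ n) := by
    intro n t ht
    exact (MeasurableSpace.le_def.mp (hsup_le Set.univ)) _
      ((hξmeasS Set.univ trivial n fun _ _ _ => trivial) ht)
  have hopMS : ∀ (S : Set (RandIdx d)) (x : ℤ) (n : ℕ),
      Sum.inr (Sum.inr ()) ∈ S →
      (∀ (i : Site d) (k : ℕ), k < n → Sum.inl (i, k) ∈ S) →
      (∀ i : Site d, i ∈ shiftedBox d L ((N : ℝ) * L) x → Sum.inl (i, n) ∈ S) →
      Sum.inr (Sum.inl (x, n)) ∈ S →
      MeasurableSet[⨆ k ∈ S, randm U V ξ0 k] (opDef d L N θ U V ξ G x n) := by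
    intro S x n hS0 hSU hSB hSV
    have hξn := hξmeasS S hS0 n hSU
    have hH : MeasurableSet[⨆ k ∈ S, randm U V ξ0 k] {ω | memH d L x (ξ n ω)} :=
      hξn (measurableSet_memH d L x)
    have hGev : MeasurableSet[⨆ k ∈ S, randm U V ξ0 k]
        {ω | (ξ n ω, fun i : ↥(shiftedBox d L ((N : ℝ) * L) x) => U ↑i n ω) ∈ G x n} := by
      have hrfl : {ω | (ξ n ω, fun i : ↥(shiftedBox d L ((N : ℝ) * L) x) => U ↑i n ω) ∈ G x n} =
          (fun ω => ((ξ n ω, fun i : ↥(shiftedBox d L ((N : ℝ) * L) x) => U ↑i n ω) :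
            (Site d → Bool) × (↥(shiftedBox d L ((N : ℝ) * L) x) → E))) ⁻¹' G x n := rfl
      rw [hrfl]
      have hUpart : Measurable[⨆ k ∈ S, randm U V ξ0 k]
          (fun ω (i : ↥(shiftedBox d L ((N : ℝ) * L) x)) => U ↑i n ω) := by
        letI := ⨆ k ∈ S, randm U V ξ0 k
        refine measurable_pi_iff.mpr fun i => ?_
        exact hbasic S (Sum.inl (↑i, n)) (hSB ↑i i.2)
      exact (hξn.prodMk hUpart) (hGmeas x n)
    have hVm' : Measurable[⨆ k ∈ S, randm U V ξ0 k] (V x n) :=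
      hbasic S (Sum.inr (Sum.inl (x, n))) hSV
    have hV : MeasurableSet[⨆ k ∈ S, randm U V ξ0 k] {ω | V x n ω ≤ 1 - θ} :=
      hVm' measurableSet_Iic
    have hrw : opDef d L N θ U V ξ G x n =
        {ω : Ω | Even (x + (n : ℤ))} ∩
          (({ω | memH d L x (ξ n ω)} ∩
            {ω | (ξ n ω, fun i : ↥(shiftedBox d L ((N : ℝ) * L) x) => U ↑i n ω) ∈ G x n}) ∪
           ({ω | memH d L x (ξ n ω)}ᶜ ∩ {ω | V x n ω ≤ 1 - θ})) := by
      ext ω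
      simp only [opDef, Set.mem_setOf_eq, Set.mem_inter_iff, Set.mem_union, Set.mem_compl_iff]
    rw [hrw]
    exact (MeasurableSet.const _).inter ((hH.inter hGev).union (hH.compl.inter hV))
  have hopMeas : ∀ x n, MeasurableSet (opDef d L N θ U V ξ G x n) := fun x n =>
    (MeasurableSpace.le_def.mp (hsup_le Set.univ)) _
      (hopMS Set.univ x n trivial (fun _ _ _ => trivial) (fun _ _ => trivial) trivial)
  have hiIndep : iIndep (randm U V ξ0) P := hindep.iIndep
  -- the key one-site estimate
  have key : ∀ (x : ℤ) (n : ℕ), Even (x + (n : ℤ)) → ∀ A : Set Ω,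
      MeasurableSet[⨆ j ∈ (excluded d L ((N : ℝ) * L) x n)ᶜ, randm U V ξ0 j] A →
      P (A ∩ (opDef d L N θ U V ξ G x n)ᶜ) ≤ ENNReal.ofReal θ * P A := by
    intro x n hEv A hAM
    have hAm0 : MeasurableSet A := (MeasurableSpace.le_def.mp (hsup_le _)) _ hAM
    have hYm : Measurable[⨆ j ∈ (excluded d L ((N : ℝ) * L) x n)ᶜ, randm U V ξ0 j]
        (fun ω => (ξ n ω, A.boolIndicator ω)) := by
      refine Measurable.prodMk ?_ (measurable_boolIndicator hAM)
      refine hξmeasS _ ?_ n ?_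
      · intro hmem
        rcases hmem with h | ⟨i', hi', h⟩ <;> simp at h
      · intro i k hk hmem
        rcases hmem with h | ⟨i', hi', h⟩
        · simp at h
        · simp only [Sum.inl.injEq, Prod.mk.injEq] at h
          omega
    have hZm : Measurable[⨆ j ∈ excluded d L ((N : ℝ) * L) x n, randm U V ξ0 j]
        (fun ω => ((fun i : ↥(shiftedBox d L ((N : ℝ) * L) x) => U ↑i n ω), V x n ω)) := by
      have hU2 : Measurable[⨆ j ∈ excluded d L ((N : ℝ) * L) x n, randm U V ξ0 j]
          (fun ω (i : ↥(shiftedBox d L ((N : ℝ) * L) x)) => U ↑i n ω) := by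
        letI := ⨆ j ∈ excluded d L ((N : ℝ) * L) x n, randm U V ξ0 j
        refine measurable_pi_iff.mpr fun i => ?_
        exact hbasic _ (Sum.inl (↑i, n)) (Or.inr ⟨↑i, i.2, rfl⟩)
      have hV2 : Measurable[⨆ j ∈ excluded d L ((N : ℝ) * L) x n, randm U V ξ0 j]
          (V x n) :=
        hbasic _ (Sum.inr (Sum.inl (x, n))) (Or.inl rfl)
      exact hU2.prodMk hV2
    have hIndep : Indep (⨆ j ∈ (excluded d L ((N : ℝ) * L) x n)ᶜ, randm U V ξ0 j)
        (⨆ j ∈ excluded d L ((N : ℝ) * L) x n, randm U V ξ0 j) P :=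
      (ProbabilityTheory.indep_biSup_compl h_le hiIndep _).symm
    have hYZ : IndepFun (fun ω => (ξ n ω, A.boolIndicator ω))
        (fun ω => ((fun i : ↥(shiftedBox d L ((N : ℝ) * L) x) => U ↑i n ω), V x n ω)) P :=
      ProbabilityTheory.indep_of_indep_of_le_left
        (ProbabilityTheory.indep_of_indep_of_le_right hIndep hZm.comap_le) hYm.comap_le
    have hcore := key_step P d L N x n θ hθ0 hθ1 (ξ n) (fun i => U i n) (V x n)
      (hξmeas n) (fun i => hUmeas i n) (hVmeas x n) (G x n) (hGmeas x n)
      (fun ξc hξc => hGprob x n hEv ξc hξc) (hVunif x n) A hAm0 hYZ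
    have hop : A ∩ (opDef d L N θ U V ξ G x n)ᶜ =
        A ∩ {ω | (memH d L x (ξ n ω) ∧
          (ξ n ω, fun i : ↥(shiftedBox d L ((N : ℝ) * L) x) => U ↑i n ω) ∈ G x n) ∨
          (¬ memH d L x (ξ n ω) ∧ V x n ω ≤ 1 - θ)}ᶜ := by
      ext ω
      simp [opDef, hEv]
    rw [hop]
    exact hcore
  -- the 2N-dependent density bound
  have density : ∀ I : Finset (ℤ × ℕ), (∀ p ∈ I, Even (p.1 + (p.2 : ℤ))) →
      (∀ p ∈ I, ∀ q ∈ I, p ≠ q →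
        (2 * N : ℤ) < max |p.1 - q.1| |(p.2 : ℤ) - (q.2 : ℤ)|) →
      P (⋂ p ∈ I, (opDef d L N θ U V ξ G p.1 p.2)ᶜ) ≤ ENNReal.ofReal θ ^ I.card := by
    intro I
    induction I using Finset.strongInduction with
    | _ I ih =>
      intro hevens hdists
      rcases I.eq_empty_or_nonempty with rfl | hne
      · simp
      · obtain ⟨p, hp, hpmax⟩ := I.exists_max_image (fun q => q.2) hne
        have hIeq : (⋂ q ∈ I, (opDef d L N θ U V ξ G q.1 q.2)ᶜ) =
            (opDef d L N θ U V ξ G p.1 p.2)ᶜ ∩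
              ⋂ q ∈ I.erase p, (opDef d L N θ U V ξ G q.1 q.2)ᶜ := by
          conv_lhs => rw [← Finset.insert_erase hp]
          rw [Finset.set_biInter_insert]
        have hAM : MeasurableSet[⨆ j ∈ (excluded d L ((N : ℝ) * L) p.1 p.2)ᶜ, randm U V ξ0 j]
            (⋂ q ∈ I.erase p, (opDef d L N θ U V ξ G q.1 q.2)ᶜ) := by
          refine MeasurableSet.biInter (Set.to_countable _) fun q hq => ?_
          have hqI := Finset.mem_of_mem_erase hq
          have hqp : q ≠ p := Finset.ne_of_mem_erase hq
          have hqle : q.2 ≤ p.2 := hpmax q hqI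
          refine (hopMS _ q.1 q.2 ?_ ?_ ?_ ?_).compl
          · intro hmem
            rcases hmem with h | ⟨i', hi', h⟩ <;> simp at h
          · intro i k hk hmem
            rcases hmem with h | ⟨i', hi', h⟩
            · simp at h
            · simp only [Sum.inl.injEq, Prod.mk.injEq] at h
              omega
          · intro i hi hmem
            rcases hmem with h | ⟨i', hi', h⟩
            · simp at h
            · simp only [Sum.inl.injEq, Prod.mk.injEq] at h
              obtain ⟨hii', hnn⟩ := h
              have hdist := hdists q hqI p hp hqp
              have habs : |(q.2 : ℤ) - (p.2 : ℤ)| = 0 := by rw [hnn]; simp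
              rw [habs, max_eq_left (abs_nonneg _)] at hdist
              have hlt : 2 * ((N : ℝ) * L) < |(q.1 : ℝ) - (p.1 : ℝ)| * L := by
                have h1 : ((2 * N : ℤ) : ℝ) < ((|q.1 - p.1| : ℤ) : ℝ) := by
                  exact_mod_cast hdist
                have h2 : ((|q.1 - p.1| : ℤ) : ℝ) = |(q.1 : ℝ) - (p.1 : ℝ)| := by
                  push_cast [Int.cast_abs]
                  ring_nf
                rw [h2] at h1
                push_cast at h1
                have hL1 : (1 : ℝ) ≤ (L : ℝ) := by exact_mod_cast hL
                nlinarith [abs_nonneg ((q.1 : ℝ) - (p.1 : ℝ))]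
              exact (box_disjoint d L hd hL ((N : ℝ) * L) hlt i hi) (hii' ▸ hi')
          · intro hmem
            rcases hmem with h | ⟨i', hi', h⟩
            · simp only [Sum.inr.injEq, Sum.inl.injEq, Prod.mk.injEq] at h
              exact hqp (Prod.ext h.1 h.2)
            · simp at h
        rw [hIeq, Set.inter_comm]
        have hkey := key p.1 p.2 (hevens p hp) _ hAM
        have hih := ih (I.erase p) (Finset.erase_ssubset hp)
          (fun q hq => hevens q (Finset.mem_of_mem_erase hq))
          (fun q hq r hr hqr =>
            hdists q (Finset.mem_of_mem_erase hq) r (Finset.mem_of_mem_erase hr) hqr)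
        have hcard : I.card = (I.erase p).card + 1 := by
          rw [Finset.card_erase_of_mem hp]
          have := Finset.card_pos.mpr hne
          omega
        calc P ((⋂ q ∈ I.erase p, (opDef d L N θ U V ξ G q.1 q.2)ᶜ) ∩
              (opDef d L N θ U V ξ G p.1 p.2)ᶜ)
            ≤ ENNReal.ofReal θ * P (⋂ q ∈ I.erase p, (opDef d L N θ U V ξ G q.1 q.2)ᶜ) := hkey
          _ ≤ ENNReal.ofReal θ * ENNReal.ofReal θ ^ (I.erase p).card :=
              mul_le_mul_right hih _
          _ = ENNReal.ofReal θ ^ I.card := by rw [hcard, pow_succ]; ring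
  refine ⟨fun x n => opDef d L N θ U V ξ G x n, hopMeas, ?_, ?_⟩
  · intro I hevens hdists
    calc P (⋂ p ∈ I, (opDef d L N θ U V ξ G p.1 p.2)ᶜ)
        ≤ ENNReal.ofReal θ ^ I.card := density I hevens hdists
      _ = ENNReal.ofReal (θ ^ I.card) := (ENNReal.ofReal_pow hθ0.le _).symm
  · refine ae_of_all P ?_
    rintro ω n y ⟨x, ⟨hxEven, hxH⟩, f, hf0, hfn, hstep, hopen⟩
    have hmem : ∀ k, k ≤ n → memH d L (f k) (ξ k ω) := by
      intro k
      induction k with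
      | zero =>
        intro _
        rw [hf0]
        exact hxH
      | succ k ihk =>
        intro hk1
        have hk : k ≤ n := Nat.le_of_succ_le hk1
        have hIH := ihk hk
        obtain ⟨hEvk, hcase⟩ := hopen k (Nat.zero_le k) hk
        have hGev : (ξ k ω, fun i : ↥(shiftedBox d L ((N : ℝ) * L) (f k)) => U ↑i k ω) ∈
            G (f k) k := by
          rcases hcase with ⟨_, h⟩ | ⟨hnH, _⟩
          · exact h
          · exact absurd hIH hnH
        have hgood := hGgood (f k) k hEvk (ξ k ω) (fun i => U i k ω) hIH hGev
        have hstepk := hstep (k + 1) (Nat.succ_pos k) hk1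
        rw [hξrec k ω]
        have hsub : k + 1 - 1 = k := rfl
        rw [hsub] at hstepk
        rcases hstepk with h | h
        · have hfk : f (k + 1) = f k + 1 := by omega
          rw [hfk]
          exact hgood.1
        · have hfk : f (k + 1) = f k - 1 := by omega
          rw [hfk]
          exact hgood.2
    have hopn := hopen n (Nat.zero_le n) le_rfl
    constructor
    · have := hopn.1
      rwa [hfn] at this
    · have := hmem n le_rfl
      rwa [hfn] at this

end
end
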